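/- arXiv:2504.19931 — 3 statements merged into one kernel-verified Lean document; each statement's English description precedes it below -/
import Mathlib

section
/- Let Z : H₋ → H₊ be a Hilbert–Schmidt operator with operator norm strictly less than 1 (equivalently id - Z*Z is positive definite). Define A_Z := Z · (argtanh|Z|)/|Z| = Z · Σ_{k≥0} (Z*Z)^k/(2k+1). Then |A_Z| = argtanh|Z| and A_Z · |A_Z|^{-1} · tanh|A_Z| = Z, where all functions of |Z| and |A_Z| are defined by continuous functional calculus. -/
noncomputable section

open ContinuousLinearMap Complex
open scoped InnerProductSpace

namespace Siegel

variable (Hp Hm : Type) [NormedAddCommGroup Hp] [InnerProductSpace ℂ Hp] [CompleteSpace Hp]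
  [NormedAddCommGroup Hm] [InnerProductSpace ℂ Hm] [CompleteSpace Hm]

/-- The full Hilbert space `H = H₊ ⊕ H₋` (Hilbert space direct sum). -/
abbrev FullH := WithLp 2 (Hp × Hm)

variable {Hp Hm}

/-- The block operator `[[g, h], [k, l]]` on `H = H₊ ⊕ H₋`. -/
def blockOp (g : Hp →L[ℂ] Hp) (h : Hm →L[ℂ] Hp) (k : Hp →L[ℂ] Hm) (l : Hm →L[ℂ] Hm) :
    FullH Hp Hm →L[ℂ] FullH Hp Hm :=
  ((WithLp.prodContinuousLinearEquiv 2 ℂ Hp Hm).symm :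
      (Hp × Hm) →L[ℂ] FullH Hp Hm) ∘L
    ((g.coprod h).prod (k.coprod l)) ∘L
    ((WithLp.prodContinuousLinearEquiv 2 ℂ Hp Hm) : FullH Hp Hm →L[ℂ] (Hp × Hm))

/-- The complex structure `J`, acting by `i` on `H₊` and `-i` on `H₋`. -/
def Jop : FullH Hp Hm →L[ℂ] FullH Hp Hm :=
  blockOp (Complex.I • ContinuousLinearMap.id ℂ Hp) 0 0
    ((-Complex.I) • ContinuousLinearMap.id ℂ Hm)

section Conj

variable (C : Hp ≃ₛₗᵢ[starRingEnd ℂ] Hm)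

/-- Conjugate `h̄ : H₊ → H₋` of an operator `h : H₋ → H₊`, with respect to the
conjugation `C` exchanging `H₊` and `H₋`: `h̄ u = conj (h (conj u))`. -/
def cbar (h : Hm →L[ℂ] Hp) : Hp →L[ℂ] Hm :=
  LinearMap.mkContinuous
    { toFun := fun u => C (h (C u))
      map_add' := by intro u v; simp
      map_smul' := by intro a u; simp [map_smulₛₗ] }
    ‖h‖ (by
      intro u
      simp only [LinearMap.coe_mk, AddHom.coe_mk]
      calc ‖C (h (C u))‖ = ‖h (C u)‖ := C.norm_map _
        _ ≤ ‖h‖ * ‖C u‖ := h.le_opNorm _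
        _ = ‖h‖ * ‖u‖ := by rw [C.norm_map])

/-- Conjugate `ḡ : H₋ → H₋` of an operator `g : H₊ → H₊`. -/
def dbar (g : Hp →L[ℂ] Hp) : Hm →L[ℂ] Hm :=
  LinearMap.mkContinuous
    { toFun := fun v => C (g (C.symm v))
      map_add' := by intro u v; simp
      map_smul' := by intro a u; simp [map_smulₛₗ] }
    ‖g‖ (by
      intro u
      simp only [LinearMap.coe_mk, AddHom.coe_mk]
      calc ‖C (g (C.symm u))‖ = ‖g (C.symm u)‖ := C.norm_map _
        _ ≤ ‖g‖ * ‖C.symm u‖ := g.le_opNorm _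
        _ = ‖g‖ * ‖u‖ := by rw [C.symm.norm_map])

/-- The transpose `hᵀ := (h̄)* : H₋ → H₊` of `h : H₋ → H₊`. -/
def transp (h : Hm →L[ℂ] Hp) : Hm →L[ℂ] Hp :=
  ContinuousLinearMap.adjoint (cbar C h)

end Conj

/-- Hilbert–Schmidt property relative to a Hilbert basis of the domain. -/
def IsHS {ι E F : Type*} [NormedAddCommGroup E] [InnerProductSpace ℂ E]
    [NormedAddCommGroup F] [InnerProductSpace ℂ F]
    (b : HilbertBasis ι ℂ E) (T : E →L[ℂ] F) : Prop :=
  Summable fun i => ‖T (b i)‖ ^ 2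

/-- Squared Hilbert–Schmidt norm relative to a Hilbert basis. -/
def hsNorm {ι E F : Type*} [NormedAddCommGroup E] [InnerProductSpace ℂ E]
    [NormedAddCommGroup F] [InnerProductSpace ℂ F]
    (b : HilbertBasis ι ℂ E) (T : E →L[ℂ] F) : ℝ :=
  Real.sqrt (∑' i, ‖T (b i)‖ ^ 2)

/-- The absolute value `|T| = (T*T)^{1/2}` of an operator `T : E → F`,
defined by continuous functional calculus. -/
def absOp {E F : Type*} [NormedAddCommGroup E] [InnerProductSpace ℂ E] [CompleteSpace E]
    [NormedAddCommGroup F] [InnerProductSpace ℂ F] [CompleteSpace F]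
    (T : E →L[ℂ] F) : E →L[ℂ] E :=
  cfc Real.sqrt (ContinuousLinearMap.adjoint T ∘L T)

/-- Trace class property relative to a Hilbert basis: `Σ ⟨eᵢ, |T| eᵢ⟩ < ∞`. -/
def IsTraceClassAlong {ι E : Type*} [NormedAddCommGroup E] [InnerProductSpace ℂ E]
    [CompleteSpace E] (b : HilbertBasis ι ℂ E) (T : E →L[ℂ] E) : Prop :=
  Summable fun i => (inner ℂ (b i) (absOp T (b i)) : ℂ).re

/-- The trace norm `‖T‖₁ = Σ ⟨eᵢ, |T| eᵢ⟩` relative to a Hilbert basis. -/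
def traceNormAlong {ι E : Type*} [NormedAddCommGroup E] [InnerProductSpace ℂ E]
    [CompleteSpace E] (b : HilbertBasis ι ℂ E) (T : E →L[ℂ] E) : ℝ :=
  ∑' i, (inner ℂ (b i) (absOp T (b i)) : ℂ).re

/-- The trace of an operator relative to a Hilbert basis. -/
def traceAlong {ι E : Type*} [NormedAddCommGroup E] [InnerProductSpace ℂ E]
    (b : HilbertBasis ι ℂ E) (T : E →L[ℂ] E) : ℂ :=
  ∑' i, (inner ℂ (b i) (T (b i)) : ℂ)

/-- Positive definiteness of an operator: `⟨T u, u⟩ > 0` for all `u ≠ 0`. -/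
def IsPosDef {E : Type*} [NormedAddCommGroup E] [InnerProductSpace ℂ E]
    (T : E →L[ℂ] E) : Prop :=
  ∀ u : E, u ≠ 0 → 0 < (inner ℂ (T u) u : ℂ).re

/-- Membership in the restricted Siegel disc. -/
def InSiegel {ι : Type*} (C : Hp ≃ₛₗᵢ[starRingEnd ℂ] Hm) (bm : HilbertBasis ι ℂ Hm)
    (Z : Hm →L[ℂ] Hp) : Prop :=
  IsHS bm Z ∧ transp C Z = Z ∧
    IsPosDef (1 - ContinuousLinearMap.adjoint Z ∘L Z)

/-- Membership in the Lie algebra `gl_{1,2}(V)`: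
block operators `[[A₁, A₂], [A̅₂, A̅₁]]` with `A₁` trace class and `A₂` Hilbert–Schmidt. -/
def InGl12 {ιp ιm : Type*} (C : Hp ≃ₛₗᵢ[starRingEnd ℂ] Hm)
    (bp : HilbertBasis ιp ℂ Hp) (bm : HilbertBasis ιm ℂ Hm)
    (T : FullH Hp Hm →L[ℂ] FullH Hp Hm) : Prop :=
  ∃ (A₁ : Hp →L[ℂ] Hp) (A₂ : Hm →L[ℂ] Hp),
    IsTraceClassAlong bp A₁ ∧ IsHS bm A₂ ∧
      T = blockOp A₁ A₂ (cbar C A₂) (dbar C A₁)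

/-- Real inverse hyperbolic tangent. -/
def artanh (x : ℝ) : ℝ := Real.log ((1 + x) / (1 - x)) / 2


/-- The entire function `t ↦ cosh (√t)`, so that `cosh |A| = coshs (A*A)` via cfc. -/
def coshs (t : ℝ) : ℝ := Real.cosh (Real.sqrt t)

/-- The entire function `t ↦ sinh (√t) / √t`, so that `sinh|A|/|A| = sinhc (A*A)` via cfc. -/
def sinhc (t : ℝ) : ℝ := if t = 0 then 1 else Real.sinh (Real.sqrt t) / Real.sqrt t

/-- The entire function `t ↦ tanh (√t) / √t`. -/
def tanhc (t : ℝ) : ℝ := if t = 0 then 1 else Real.tanh (Real.sqrt t) / Real.sqrt t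

/-- The function `t ↦ artanh (√t) / √t`, so that `argtanh|Z|/|Z| = argFun (Z*Z)` via cfc. -/
def argFun (t : ℝ) : ℝ := if t = 0 then 1 else artanh (Real.sqrt t) / Real.sqrt t

/-- `A_Z := Z ⬝ argtanh|Z|/|Z|`, defined via continuous functional calculus. -/
def AZop (Z : Hm →L[ℂ] Hp) : Hm →L[ℂ] Hp :=
  Z ∘L cfc argFun (ContinuousLinearMap.adjoint Z ∘L Z)

/-- The momentum map `μ(M)(A) = -½ Tr((M*JM - J)A)` (trace relative to a Hilbert basis). -/
def muO {ιH : Type*} (bH : HilbertBasis ιH ℂ (FullH Hp Hm))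
    (M A : FullH Hp Hm →L[ℂ] FullH Hp Hm) : ℂ :=
  -(1 / 2 : ℂ) * traceAlong bH ((ContinuousLinearMap.adjoint M ∘L Jop ∘L M - Jop) ∘L A)


/-! ### Auxiliary real-analysis lemmas -/

lemma artanh_zero : artanh 0 = 0 := by simp [artanh]

lemma artanh_nonneg {x : ℝ} (h0 : 0 ≤ x) (h1 : x < 1) : 0 ≤ artanh x := by
  have hx1 : (0:ℝ) < 1 - x := by linarith
  have : (1:ℝ) ≤ (1 + x) / (1 - x) := by rw [le_div_iff₀ hx1]; linarith
  exact div_nonneg (Real.log_nonneg this) (by norm_num)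

lemma artanh_pos {x : ℝ} (h0 : 0 < x) (h1 : x < 1) : 0 < artanh x := by
  have hx1 : (0:ℝ) < 1 - x := by linarith
  have : (1:ℝ) < (1 + x) / (1 - x) := by rw [lt_div_iff₀ hx1]; linarith
  exact div_pos (Real.log_pos this) (by norm_num)

lemma tanh_artanh {x : ℝ} (h0 : 0 ≤ x) (h1 : x < 1) : Real.tanh (artanh x) = x := by
  have hx1 : (0:ℝ) < 1 - x := by linarith
  have hx2 : (0:ℝ) < 1 + x := by linarith
  have hu : (0:ℝ) < (1 + x) / (1 - x) := div_pos hx2 hx1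
  have he2 : Real.exp (artanh x) ^ 2 = (1 + x) / (1 - x) := by
    rw [pow_two, ← Real.exp_add, show artanh x + artanh x = Real.log ((1 + x) / (1 - x)) by
      unfold artanh; ring, Real.exp_log hu]
  have hepos : 0 < Real.exp (artanh x) := Real.exp_pos _
  rw [Real.tanh_eq_sinh_div_cosh, Real.sinh_eq, Real.cosh_eq, Real.exp_neg]
  set e := Real.exp (artanh x) with he
  have hene : e ≠ 0 := hepos.ne'
  have key : e ^ 2 * (1 - x) = 1 + x := by
    field_simp at he2 ⊢
    linarith [he2]
  field_simp
  nlinarith [hepos]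

lemma tendsto_sqrtRatio {f : ℝ → ℝ} (hf0 : f 0 = 0) (hf : HasDerivAt f 1 0) :
    Filter.Tendsto (fun t => f (Real.sqrt t) / Real.sqrt t) (nhdsWithin 0 (Set.Ioi 0)) (nhds 1) := by
  have hslope : Filter.Tendsto (slope f 0) (nhdsWithin 0 {(0:ℝ)}ᶜ) (nhds 1) :=
    hasDerivAt_iff_tendsto_slope.mp hf
  have hsqrt : Filter.Tendsto Real.sqrt (nhdsWithin 0 (Set.Ioi 0)) (nhdsWithin 0 {(0:ℝ)}ᶜ) := by
    rw [tendsto_nhdsWithin_iff]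
    constructor
    · have := Real.continuous_sqrt.continuousWithinAt (s := Set.Ioi (0:ℝ)) (x := 0)
      simpa [ContinuousWithinAt, Real.sqrt_zero] using this
    · filter_upwards [self_mem_nhdsWithin] with t ht
      exact Set.mem_compl_singleton_iff.mpr (Real.sqrt_pos.mpr ht).ne'
  have h := hslope.comp hsqrt
  apply h.congr
  intro t
  simp [slope_def_field, hf0]

lemma hasDerivAt_tanh0 : HasDerivAt Real.tanh 1 0 := by
  have h := (Real.hasDerivAt_sinh 0).div (Real.hasDerivAt_cosh 0) (Real.cosh_pos 0).ne'
  rw [show (Real.sinh / Real.cosh) = Real.tanh from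
    funext fun x => (Real.tanh_eq_sinh_div_cosh x).symm] at h
  simpa using h

lemma hasDerivAt_artanh0 : HasDerivAt artanh 1 0 := by
  have hnum : HasDerivAt (fun x : ℝ => 1 + x) 1 0 := (hasDerivAt_id 0).const_add 1
  have hden : HasDerivAt (fun x : ℝ => 1 - x) (-1) 0 := (hasDerivAt_id 0).const_sub 1
  have hlog := (hnum.div hden (by norm_num)).log (by norm_num)
  have := hlog.div_const 2
  refine (this.congr_deriv (by norm_num [Pi.div_apply])).congr_of_eventuallyEq
    (Filter.Eventually.of_forall fun x => rfl)

lemma continuousAt_artanh {y : ℝ} (h0 : -1 < y) (h1 : y < 1) : ContinuousAt artanh y :=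
  ContinuousAt.div_const (ContinuousAt.log (ContinuousAt.div (by fun_prop) (by fun_prop)
    (by intro hcon; rw [sub_eq_zero] at hcon; linarith))
    (ne_of_gt (div_pos (by linarith) (by linarith)))) 2

lemma continuous_tanh : Continuous Real.tanh := by
  rw [show Real.tanh = fun x => Real.sinh x / Real.cosh x from
    funext fun x => Real.tanh_eq_sinh_div_cosh x]
  exact Real.continuous_sinh.div Real.continuous_cosh fun x => (Real.cosh_pos x).ne'

lemma continuousOn_tanhc : ContinuousOn tanhc (Set.Ici (0:ℝ)) := by
  intro t ht
  rcases eq_or_lt_of_le (Set.mem_Ici.mp ht) with h | h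
  · rw [← continuousWithinAt_diff_self]
    rw [ContinuousWithinAt, ← h, Set.Ici_sdiff_left]
    rw [show tanhc 0 = 1 from if_pos rfl]
    apply (tendsto_sqrtRatio Real.tanh_zero hasDerivAt_tanh0).congr'
    filter_upwards [self_mem_nhdsWithin] with s hs
    rw [tanhc, if_neg (ne_of_gt hs)]
  · apply ContinuousAt.continuousWithinAt
    have hc : ContinuousAt (fun s => Real.tanh (Real.sqrt s) / Real.sqrt s) t :=
      ((continuous_tanh.comp Real.continuous_sqrt).continuousAt).div
        Real.continuous_sqrt.continuousAt (Real.sqrt_pos.mpr h).ne'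
    apply hc.congr
    filter_upwards [eventually_ne_nhds h.ne'] with s hs
    rw [tanhc, if_neg hs]

lemma continuousOn_argFun : ContinuousOn argFun (Set.Ico (0:ℝ) 1) := by
  intro t ht
  obtain ⟨h0, h1⟩ := ht
  rcases eq_or_lt_of_le h0 with h | h
  · rw [← continuousWithinAt_diff_self, ContinuousWithinAt, ← h]
    have hsub : Set.Ico (0:ℝ) 1 \ {(0:ℝ)} ⊆ Set.Ioi 0 := by
      rintro s ⟨⟨hs0, _⟩, hs⟩
      exact lt_of_le_of_ne hs0 (Ne.symm hs)
    rw [show argFun 0 = 1 from if_pos rfl]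
    apply ((tendsto_sqrtRatio (by simp [artanh]) hasDerivAt_artanh0).mono_left
      (nhdsWithin_mono 0 hsub)).congr'
    filter_upwards [self_mem_nhdsWithin] with s hs
    rw [argFun, if_neg (hsub hs).ne']
  · apply ContinuousAt.continuousWithinAt
    have hsq1 : Real.sqrt t < 1 := by
      rw [show (1:ℝ) = Real.sqrt 1 by simp]
      exact Real.sqrt_lt_sqrt h0 h1
    have hc : ContinuousAt (fun s => artanh (Real.sqrt s) / Real.sqrt s) t :=
      ((continuousAt_artanh (by linarith [Real.sqrt_nonneg t]) hsq1).comp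
        Real.continuous_sqrt.continuousAt).div
        Real.continuous_sqrt.continuousAt (Real.sqrt_pos.mpr h).ne'
    apply hc.congr
    filter_upwards [eventually_ne_nhds h.ne'] with s hs
    rw [argFun, if_neg hs]

/-- pointwise identity: the square function under `|A_Z|`. -/
lemma gfun_eq {t : ℝ} (h0 : 0 ≤ t) (h1 : t < 1) (ht : 0 < t) :
    argFun t * t * argFun t = artanh (Real.sqrt t) ^ 2 := by
  have hs : 0 < Real.sqrt t := Real.sqrt_pos.mpr ht
  rw [argFun, if_neg ht.ne']
  rw [← Real.sq_sqrt h0]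
  field_simp
  rw [Real.sqrt_sq hs.le]
  ring

lemma gfun_nonneg {t : ℝ} (h0 : 0 ≤ t) : 0 ≤ argFun t * t * argFun t := by
  have : argFun t * t * argFun t = t * argFun t ^ 2 := by ring
  rw [this]
  positivity

lemma sqrt_gfun_eq {t : ℝ} (h0 : 0 ≤ t) (h1 : t < 1) :
    Real.sqrt (argFun t * t * argFun t) = artanh (Real.sqrt t) := by
  rcases eq_or_lt_of_le h0 with h | h
  · rw [← h]
    simp [argFun, artanh]
  · have hsq1 : Real.sqrt t < 1 := by
      rw [show (1:ℝ) = Real.sqrt 1 by simp]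
      exact Real.sqrt_lt_sqrt h0 h1
    rw [gfun_eq h0 h1 h, Real.sqrt_sq (artanh_nonneg (Real.sqrt_nonneg t) hsq1)]

lemma argFun_mul_tanhc_gfun {t : ℝ} (h0 : 0 ≤ t) (h1 : t < 1) :
    argFun t * tanhc (argFun t * t * argFun t) = 1 := by
  rcases eq_or_lt_of_le h0 with h | h
  · rw [← h]
    norm_num [argFun, tanhc]
  · have hs : 0 < Real.sqrt t := Real.sqrt_pos.mpr h
    have hsq1 : Real.sqrt t < 1 := by
      rw [show (1:ℝ) = Real.sqrt 1 by simp]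
      exact Real.sqrt_lt_sqrt h0 h1
    have ha : 0 < artanh (Real.sqrt t) := artanh_pos hs hsq1
    rw [gfun_eq h0 h1 h, tanhc, if_neg (by positivity), Real.sqrt_sq ha.le,
      tanh_artanh hs.le hsq1, argFun, if_neg h.ne']
    field_simp

/-- For `Z` Hilbert–Schmidt with `‖Z‖ < 1` and
`A_Z := Z ⬝ argtanh|Z|/|Z|`, one has `|A_Z| = argtanh|Z|` and
`A_Z ⬝ |A_Z|⁻¹ ⬝ tanh|A_Z| = Z`. -/
theorem AZ_absolute_value_and_tanh {ιm : Type*} (bm : HilbertBasis ιm ℂ Hm)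
    (Z : Hm →L[ℂ] Hp) (hZ : IsHS bm Z) (hZ1 : ‖Z‖ < 1) :
    absOp (AZop Z) = cfc (fun t : ℝ => artanh (Real.sqrt t))
        (ContinuousLinearMap.adjoint Z ∘L Z) ∧
      AZop Z ∘L cfc tanhc (ContinuousLinearMap.adjoint (AZop Z) ∘L AZop Z) = Z := by
  classical
  set P : Hm →L[ℂ] Hm := ContinuousLinearMap.adjoint Z ∘L Z with hPdef
  have hP : IsSelfAdjoint P := by
    rw [IsSelfAdjoint, star_eq_adjoint, hPdef, adjoint_comp, adjoint_adjoint]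
  have hPnn : (0 : Hm →L[ℂ] Hm) ≤ P := by
    rw [nonneg_iff_isPositive]
    simpa [hPdef, one_def] using (isPositive_one (E := Hp)).adjoint_conj Z
  have hspec : spectrum ℝ P ⊆ Set.Ico 0 1 := by
    intro t ht
    constructor
    · exact spectrum_nonneg_of_nonneg hPnn ht
    · have h1 := spectrum.norm_le_norm_mul_of_mem (𝕜 := ℝ) ht
      have h2 : ‖P‖ ≤ ‖Z‖ * ‖Z‖ := by rw [hPdef, norm_adjoint_comp_self]
      have h3 : ‖(1 : Hm →L[ℂ] Hm)‖ ≤ 1 := norm_id_le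
      have hZ0 : 0 ≤ ‖Z‖ := norm_nonneg Z
      calc t ≤ ‖t‖ := le_abs_self t
        _ ≤ ‖P‖ * ‖(1 : Hm →L[ℂ] Hm)‖ := h1
        _ ≤ (‖Z‖ * ‖Z‖) * 1 := mul_le_mul h2 h3 (norm_nonneg _) (by positivity)
        _ < 1 := by nlinarith
  have hargc : ContinuousOn argFun (spectrum ℝ P) := continuousOn_argFun.mono hspec
  have hidc : ContinuousOn (fun t : ℝ => t) (spectrum ℝ P) := continuousOn_id
  set g : ℝ → ℝ := fun t => argFun t * t * argFun t with hgdef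
  have hgc : ContinuousOn g (spectrum ℝ P) := (hargc.mul hidc).mul hargc
  have haSA : IsSelfAdjoint (cfc argFun P) := cfc_predicate argFun P
  have hadj : ContinuousLinearMap.adjoint (AZop Z) = cfc argFun P ∘L ContinuousLinearMap.adjoint Z := by
    rw [AZop, adjoint_comp, ← star_eq_adjoint (cfc argFun P), haSA]
  have hkey : ContinuousLinearMap.adjoint (AZop Z) ∘L AZop Z = cfc g P := by
    rw [hadj, AZop]
    have : (cfc argFun P ∘L ContinuousLinearMap.adjoint Z) ∘L
        Z ∘L cfc argFun P = cfc argFun P * (cfc (fun t : ℝ => t) P * cfc argFun P) := by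
      rw [cfc_id' ℝ P]
      simp only [mul_def, hPdef]
      rw [comp_assoc, comp_assoc]
    rw [this, ← cfc_mul _ _ P hidc hargc, ← cfc_mul argFun (fun x => x * argFun x) P hargc (hidc.mul hargc), hgdef]
    congr 1
    ext t
    ring
  have himg : g '' spectrum ℝ P ⊆ Set.Ici 0 := by
    rintro s ⟨t, ht, rfl⟩
    exact gfun_nonneg (hspec ht).1
  constructor
  · rw [absOp, hkey, ← cfc_comp Real.sqrt g P hP Real.continuous_sqrt.continuousOn hgc]
    apply cfc_congr
    intro t ht
    exact sqrt_gfun_eq (hspec ht).1 (hspec ht).2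
  · rw [hkey, ← cfc_comp tanhc g P hP (continuousOn_tanhc.mono himg) hgc, AZop, comp_assoc]
    have : cfc argFun P ∘L cfc (tanhc ∘ g) P = cfc (fun t => argFun t * tanhc (g t)) P := by
      rw [← mul_def, ← cfc_mul _ _ P hargc ((continuousOn_tanhc.mono himg).comp hgc
        (Set.mapsTo_image g (spectrum ℝ P)))]
      rfl
    rw [this]
    have hone : cfc (fun t => argFun t * tanhc (g t)) P = 1 := by
      rw [show (1 : Hm →L[ℂ] Hm) = cfc (fun _ : ℝ => (1:ℝ)) P from (cfc_const_one ℝ P).symm]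
      apply cfc_congr
      intro t ht
      exact argFun_mul_tanhc_gfun (hspec ht).1 (hspec ht).2
    rw [hone, one_def, comp_id]


end Siegel
end
end

section
/- The stabilizer of 0 ∈ D_res(H) under the Sp_{1,2}(V,Ω)-action (a,Z) ↦ (gZ+h)(h̄Z+ḡ)^{-1} is the subgroup of block-diagonal elements [[g,0],[0,ḡ]] with g unitary on H₊ and g - id trace class; i.e., it is isomorphic to U₁(H₊) = U(H₊) ∩ (id + L¹(H₊)). -/
noncomputable section

open ContinuousLinearMap Complex
open scoped InnerProductSpace

namespace Siegel

variable (Hp Hm : Type) [NormedAddCommGroup Hp] [InnerProductSpace ℂ Hp] [CompleteSpace Hp]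
  [NormedAddCommGroup Hm] [InnerProductSpace ℂ Hm] [CompleteSpace Hm]

variable {Hp Hm}

set_option linter.unusedSectionVars false in
private lemma blockOp_apply_pair (g : Hp →L[ℂ] Hp) (h : Hm →L[ℂ] Hp)
    (k : Hp →L[ℂ] Hm) (l : Hm →L[ℂ] Hm) (u : Hp) (v : Hm) :
    blockOp g h k l ((WithLp.prodContinuousLinearEquiv 2 ℂ Hp Hm).symm (u, v)) =
      (WithLp.prodContinuousLinearEquiv 2 ℂ Hp Hm).symm (g u + h v, k u + l v) := by
  simp [blockOp]

set_option linter.unusedSectionVars false in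
private lemma cbar_zero (C : Hp ≃ₛₗᵢ[starRingEnd ℂ] Hm) : cbar C (0 : Hm →L[ℂ] Hp) = 0 := by
  ext u; simp [cbar]

set_option linter.unusedSectionVars false in
private lemma inner_pair (u u' : Hp) (v v' : Hm) :
    (inner ℂ ((WithLp.prodContinuousLinearEquiv 2 ℂ Hp Hm).symm (u, v))
      ((WithLp.prodContinuousLinearEquiv 2 ℂ Hp Hm).symm (u', v')) : ℂ) =
      inner ℂ u u' + inner ℂ v v' := by
  rw [WithLp.prod_inner_apply]
  rfl

/-- The stabilizer of `0` under the `Sp₁,₂`-action consists exactly of the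
block-diagonal elements with unitary `g` (and `g - id` trace class): `a · 0 = 0` iff `h = 0`
and `g` is unitary. -/
theorem stabilizer_of_zero {ιp ιm : Type*} (C : Hp ≃ₛₗᵢ[starRingEnd ℂ] Hm)
    (bp : HilbertBasis ιp ℂ Hp) (bm : HilbertBasis ιm ℂ Hm)
    (g : Hp →L[ℂ] Hp) (h : Hm →L[ℂ] Hp)
    (hsymp : ContinuousLinearMap.adjoint (blockOp g h (cbar C h) (dbar C g)) ∘L Jop ∘L
      blockOp g h (cbar C h) (dbar C g) = Jop)
    (hh : IsHS bm h) (hg : IsTraceClassAlong bp (g - 1))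
    (hinv : IsUnit (blockOp g h (cbar C h) (dbar C g)))
    (hdg : IsUnit (dbar C g)) :
    h ∘L Ring.inverse (dbar C g) = 0 ↔
      (h = 0 ∧ ContinuousLinearMap.adjoint g ∘L g = 1 ∧
        g ∘L ContinuousLinearMap.adjoint g = 1) := by
  set e := WithLp.prodContinuousLinearEquiv 2 ℂ Hp Hm with he
  constructor
  · intro h0
    have hzero : h = 0 := by
      have h1 : h ∘L (Ring.inverse (dbar C g) ∘L dbar C g) = (0 : Hm →L[ℂ] Hp) ∘L dbar C g := by
        rw [← ContinuousLinearMap.comp_assoc, h0]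
      rw [show Ring.inverse (dbar C g) ∘L dbar C g = 1 from Ring.inverse_mul_cancel _ hdg] at h1
      change h ∘L ContinuousLinearMap.id ℂ Hm = _ at h1
      simpa using h1
    subst hzero
    rw [cbar_zero] at hsymp hinv
    set a := blockOp g 0 (0 : Hp →L[ℂ] Hm) (dbar C g) with ha
    have hA : ∀ x y : FullH Hp Hm, (inner ℂ (a x) (Jop (a y)) : ℂ) = inner ℂ x (Jop y) := by
      intro x y
      have : (inner ℂ x ((ContinuousLinearMap.adjoint a ∘L Jop ∘L a) y) : ℂ) = inner ℂ x (Jop y) := by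
        rw [hsymp]
      rw [ContinuousLinearMap.comp_apply, ContinuousLinearMap.comp_apply,
        ContinuousLinearMap.adjoint_inner_right] at this
      exact this
    have key : ∀ u v : Hp, (inner ℂ (g u) (g v) : ℂ) = inner ℂ u v := by
      intro u v
      have h2 := hA (e.symm (u, 0)) (e.symm (v, 0))
      rw [ha, blockOp_apply_pair, blockOp_apply_pair] at h2
      simp only [map_zero, add_zero, zero_add, ContinuousLinearMap.zero_apply] at h2
      rw [show (Jop : FullH Hp Hm →L[ℂ] FullH Hp Hm) =
        blockOp (Complex.I • ContinuousLinearMap.id ℂ Hp) 0 0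
          ((-Complex.I) • ContinuousLinearMap.id ℂ Hm) from rfl,
        blockOp_apply_pair, blockOp_apply_pair] at h2
      simp only [map_zero, add_zero, zero_add, ContinuousLinearMap.zero_apply,
        ContinuousLinearMap.smul_apply, ContinuousLinearMap.id_apply, smul_zero] at h2
      rw [inner_pair, inner_pair] at h2
      simp only [inner_zero_right, add_zero, inner_smul_right] at h2
      exact mul_left_cancel₀ Complex.I_ne_zero h2
    have hgg : ContinuousLinearMap.adjoint g ∘L g = 1 := by
      ext u
      apply ext_inner_left ℂ
      intro v
      rw [ContinuousLinearMap.comp_apply, ContinuousLinearMap.adjoint_inner_right,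
        key, ContinuousLinearMap.one_apply]
    have hsurj : Function.Surjective g := by
      intro w
      obtain ⟨U, hU⟩ := hinv
      have h3 : a ((↑U⁻¹ : FullH Hp Hm →L[ℂ] FullH Hp Hm) (e.symm (w, 0))) = e.symm (w, 0) := by
        calc a ((↑U⁻¹ : FullH Hp Hm →L[ℂ] FullH Hp Hm) (e.symm (w, 0)))
            = ((↑U * ↑U⁻¹ : FullH Hp Hm →L[ℂ] FullH Hp Hm)) (e.symm (w, 0)) := by
              rw [hU]; rfl
          _ = e.symm (w, 0) := by rw [← Units.val_mul, mul_inv_cancel]; rfl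
      set z := (↑U⁻¹ : FullH Hp Hm →L[ℂ] FullH Hp Hm) (e.symm (w, 0)) with hz
      have hz2 : z = e.symm (e z) := (e.symm_apply_apply z).symm
      rw [hz2] at h3
      rw [ha, blockOp_apply_pair] at h3
      have h4 := congrArg (fun t => (e t).1) h3
      refine ⟨(e z).1, ?_⟩
      simpa [he] using h4
    refine ⟨rfl, hgg, ?_⟩
    ext w
    obtain ⟨p, hp⟩ := hsurj w
    have hAp : ContinuousLinearMap.adjoint g (g p) = p := by
      have := ContinuousLinearMap.ext_iff.mp hgg p
      simpa using this
    simp only [ContinuousLinearMap.comp_apply, ContinuousLinearMap.one_apply, ← hp, hAp]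
  · rintro ⟨h0, -, -⟩
    subst h0
    simp

end Siegel
end
end

section
/- In the Lie algebra sp_{1,2}(V,Ω) of Sp_{1,2}(V,Ω), the subspace u₁(H₊) of block-diagonal elements [[A₁,0],[0,A̅₁]] with A₁ skew-adjoint trace class admits the closed complement m = {[[0,A],[A̅,0]] : A ∈ L²(H₋,H₊), Aᵀ = A}: every element of sp_{1,2}(V,Ω) decomposes uniquely as a sum of an element of u₁(H₊) and an element of m, and both subspaces are closed in the (‖·‖₁ + ‖·‖₂)-norm. -/
noncomputable section

open ContinuousLinearMap Complex
open scoped InnerProductSpace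

namespace Siegel

variable (Hp Hm : Type) [NormedAddCommGroup Hp] [InnerProductSpace ℂ Hp] [CompleteSpace Hp]
  [NormedAddCommGroup Hm] [InnerProductSpace ℂ Hm] [CompleteSpace Hm]

variable {Hp Hm}

open scoped ENNReal

section Core
variable {ι κ : Type*} {E F G : Type*} [NormedAddCommGroup E] [InnerProductSpace ℂ E]
  [NormedAddCommGroup F] [InnerProductSpace ℂ F] [NormedAddCommGroup G] [InnerProductSpace ℂ G]

/-- Parseval. -/
lemma hasSum_parseval (b : HilbertBasis ι ℂ E) (x : E) :
    HasSum (fun i => ‖(inner ℂ (b i) x : ℂ)‖ ^ 2) (‖x‖ ^ 2) := by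
  have h := (b.hasSum_inner_mul_inner x x).mapL Complex.reCLM
  have h2 : ∀ i, Complex.reCLM ((inner ℂ x (b i) : ℂ) * inner ℂ (b i) x)
      = ‖(inner ℂ (b i) x : ℂ)‖ ^ 2 := by
    intro i
    have := inner_mul_symm_re_eq_norm (𝕜 := ℂ) x (b i)
    simp only [Complex.reCLM_apply, RCLike.re_to_complex] at this ⊢
    rw [this, norm_mul, norm_inner_symm x (b i)]
    ring
  have h3 : Complex.reCLM (inner ℂ x x : ℂ) = ‖x‖ ^ 2 := by
    have := inner_self_eq_norm_mul_norm (𝕜 := ℂ) x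
    simp only [Complex.reCLM_apply, RCLike.re_to_complex] at this ⊢
    rw [this]; ring
  rw [← h3]
  convert h using 1
  funext i
  exact (h2 i).symm


lemma eq_zero_of_forall_basis (b : HilbertBasis ι ℂ E) {X : E →L[ℂ] F}
    (h : ∀ i, X (b i) = 0) : X = 0 := by
  ext u
  have h1 := (b.hasSum_repr u).mapL X
  have h2 : (fun i => X (b.repr u i • b i)) = fun _ => (0 : F) := by
    funext i; rw [map_smul, h i, smul_zero]
  rw [h2] at h1
  simpa using h1.unique hasSum_zero

lemma hasSum_image (b : HilbertBasis ι ℂ E) (X : E →L[ℂ] F) (u : E) :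
    HasSum (fun i => (inner ℂ (b i) u : ℂ) • X (b i)) (X u) := by
  have h1 := (b.hasSum_repr u).mapL X
  have h2 : (fun i => X (b.repr u i • b i))
      = fun i => (inner ℂ (b i) u : ℂ) • X (b i) := by
    funext i; rw [map_smul, b.repr_apply_apply]
  rwa [h2] at h1

/-- A Hilbert–Schmidt bound gives an operator norm bound. -/
lemma norm_apply_le_of_hs (b : HilbertBasis ι ℂ E) {X : E →L[ℂ] F}
    (hs : Summable fun i => ‖X (b i)‖ ^ 2) (u : E) :
    ‖X u‖ ≤ Real.sqrt (∑' i, ‖X (b i)‖ ^ 2) * ‖u‖ := by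
  set t := ∑' i, ‖X (b i)‖ ^ 2 with ht
  have ht0 : 0 ≤ t := tsum_nonneg fun i => by positivity
  have hsum2 : Summable fun i => ‖(inner ℂ (b i) u : ℂ)‖ ^ 2 := (hasSum_parseval b u).summable
  have hn : Summable (fun i => ‖(inner ℂ (b i) u : ℂ)‖ * ‖X (b i)‖) := by
    apply Summable.of_nonneg_of_le (fun i => by positivity)
      (fun i => ?_) ((hsum2.add hs).mul_left (1/2))
    have := sq_nonneg (‖(inner ℂ (b i) u : ℂ)‖ - ‖X (b i)‖)
    nlinarith [norm_nonneg (X (b i)), norm_nonneg (inner ℂ (b i) u : ℂ)]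
  have h1 : ‖X u‖ ≤ ∑' i, ‖(inner ℂ (b i) u : ℂ) • X (b i)‖ := by
    rw [← (hasSum_image b X u).tsum_eq]
    apply norm_tsum_le_tsum_norm
    simpa only [norm_smul] using hn
  have h2 : ∑' i, ‖(inner ℂ (b i) u : ℂ) • X (b i)‖
      = ∑' i, ‖(inner ℂ (b i) u : ℂ)‖ * ‖X (b i)‖ := by
    simp only [norm_smul]
  have h3 : ∑' i, ‖(inner ℂ (b i) u : ℂ)‖ * ‖X (b i)‖ ≤ ‖u‖ * Real.sqrt t := by
    apply Summable.tsum_le_of_sum_le hn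
    intro s
    have cs := Finset.sum_mul_sq_le_sq_mul_sq s (fun i => ‖(inner ℂ (b i) u : ℂ)‖)
      (fun i => ‖X (b i)‖)
    have hA : ∑ i ∈ s, ‖(inner ℂ (b i) u : ℂ)‖ ^ 2 ≤ ‖u‖ ^ 2 := by
      rw [← (hasSum_parseval b u).tsum_eq]
      exact Summable.sum_le_tsum s (fun i _ => by positivity) hsum2
    have hB : ∑ i ∈ s, ‖X (b i)‖ ^ 2 ≤ t := Summable.sum_le_tsum s (fun i _ => by positivity) hs
    have h0 : (0:ℝ) ≤ ∑ i ∈ s, ‖(inner ℂ (b i) u : ℂ)‖ * ‖X (b i)‖ :=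
      Finset.sum_nonneg fun i _ => by positivity
    have h4 : (∑ i ∈ s, ‖(inner ℂ (b i) u : ℂ)‖ * ‖X (b i)‖) ^ 2 ≤ ‖u‖ ^ 2 * t := by
      calc _ ≤ _ := cs
      _ ≤ ‖u‖ ^ 2 * t := by
        apply mul_le_mul hA hB (Finset.sum_nonneg fun i _ => by positivity) (by positivity)
    calc ∑ i ∈ s, ‖(inner ℂ (b i) u : ℂ)‖ * ‖X (b i)‖
        = Real.sqrt ((∑ i ∈ s, ‖(inner ℂ (b i) u : ℂ)‖ * ‖X (b i)‖) ^ 2) :=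
          (Real.sqrt_sq h0).symm
      _ ≤ Real.sqrt (‖u‖ ^ 2 * t) := Real.sqrt_le_sqrt h4
      _ = ‖u‖ * Real.sqrt t := by
          rw [Real.sqrt_mul (by positivity), Real.sqrt_sq (norm_nonneg u)]
  rw [mul_comm]
  exact (h1.trans (le_of_eq h2)).trans h3


variable [CompleteSpace E] [CompleteSpace F]

/-- Squared Hilbert–Schmidt "norm" valued in `ℝ≥0∞`. -/
def ehs (b : HilbertBasis ι ℂ E) (X : E →L[ℂ] F) : ℝ≥0∞ :=
  ∑' i, ENNReal.ofReal (‖X (b i)‖ ^ 2)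

lemma ehs_adjoint (b : HilbertBasis ι ℂ E) (c : HilbertBasis κ ℂ F) (X : E →L[ℂ] F) :
    ehs b X = ehs c (ContinuousLinearMap.adjoint X) := by
  have step : ∀ (u : E), ENNReal.ofReal (‖X u‖ ^ 2)
      = ∑' j, ENNReal.ofReal (‖(inner ℂ (c j) (X u) : ℂ)‖ ^ 2) := by
    intro u
    rw [← (hasSum_parseval c (X u)).tsum_eq,
      ENNReal.ofReal_tsum_of_nonneg (fun j => by positivity) (hasSum_parseval c (X u)).summable]
  have step2 : ∀ (v : F), ENNReal.ofReal (‖ContinuousLinearMap.adjoint X v‖ ^ 2)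
      = ∑' i, ENNReal.ofReal (‖(inner ℂ (b i) (ContinuousLinearMap.adjoint X v) : ℂ)‖ ^ 2) := by
    intro v
    rw [← (hasSum_parseval b (ContinuousLinearMap.adjoint X v)).tsum_eq,
      ENNReal.ofReal_tsum_of_nonneg (fun j => by positivity)
        (hasSum_parseval b (ContinuousLinearMap.adjoint X v)).summable]
  calc ehs b X = ∑' i, ∑' j, ENNReal.ofReal (‖(inner ℂ (c j) (X (b i)) : ℂ)‖ ^ 2) := by
        unfold ehs; exact tsum_congr fun i => step (b i)
    _ = ∑' j, ∑' i, ENNReal.ofReal (‖(inner ℂ (c j) (X (b i)) : ℂ)‖ ^ 2) := ENNReal.tsum_comm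
    _ = ∑' j, ∑' i, ENNReal.ofReal
          (‖(inner ℂ (b i) (ContinuousLinearMap.adjoint X (c j)) : ℂ)‖ ^ 2) := by
        apply tsum_congr; intro j; apply tsum_congr; intro i
        rw [← ContinuousLinearMap.adjoint_inner_left, norm_inner_symm]
    _ = ehs c (ContinuousLinearMap.adjoint X) := by
        unfold ehs; exact tsum_congr fun j => (step2 (c j)).symm

lemma ehs_comp_le (b : HilbertBasis ι ℂ E) (Y : F →L[ℂ] G) (X : E →L[ℂ] F) :
    ehs b (Y ∘L X) ≤ ENNReal.ofReal (‖Y‖ ^ 2) * ehs b X := by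
  unfold ehs
  rw [← ENNReal.tsum_mul_left]
  apply ENNReal.tsum_le_tsum
  intro i
  rw [← ENNReal.ofReal_mul (by positivity)]
  apply ENNReal.ofReal_le_ofReal
  calc ‖(Y ∘L X) (b i)‖ ^ 2 ≤ (‖Y‖ * ‖X (b i)‖) ^ 2 := by
        apply pow_le_pow_left₀ (norm_nonneg _) (Y.le_opNorm _)
    _ = ‖Y‖ ^ 2 * ‖X (b i)‖ ^ 2 := by ring

/-- `‖X u‖² = re ⟪u, (X†X) u⟫`. -/
lemma norm_sq_eq_re_inner (X : E →L[ℂ] F) (u : E) :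
    ‖X u‖ ^ 2 = ((inner ℂ u ((ContinuousLinearMap.adjoint X ∘L X) u) : ℂ)).re := by
  have : (inner ℂ u ((ContinuousLinearMap.adjoint X ∘L X) u) : ℂ) = inner ℂ (X u) (X u) := by
    rw [ContinuousLinearMap.comp_apply, ContinuousLinearMap.adjoint_inner_right]
  rw [this]
  have := inner_self_eq_norm_mul_norm (𝕜 := ℂ) (X u)
  simp only [RCLike.re_to_complex] at this
  rw [this]; ring

/-- Loewner order comparison of diagonal entries. -/
lemma re_inner_le_of_le {P Q : E →L[ℂ] E} (h : P ≤ Q) (u : E) :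
    ((inner ℂ u (P u) : ℂ)).re ≤ ((inner ℂ u (Q u) : ℂ)).re := by
  have h1 := (ContinuousLinearMap.le_def P Q).mp h
  have h2 := (Complex.le_def.mp (h1.inner_nonneg_left u)).1
  rw [Complex.zero_re, ← RCLike.re_to_complex, inner_re_symm] at h2
  simp only [ContinuousLinearMap.sub_apply, inner_sub_right, map_sub,
    RCLike.re_to_complex] at h2
  linarith

end Core

section CFCFacts
variable {ι E F : Type*} [NormedAddCommGroup E] [InnerProductSpace ℂ E] [CompleteSpace E]
  [NormedAddCommGroup F] [InnerProductSpace ℂ F] [CompleteSpace F]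

/-- The fourth root of `T*T`. -/
def fourthRoot (T : E →L[ℂ] E) : E →L[ℂ] E :=
  cfc (fun x => Real.sqrt (Real.sqrt x)) (ContinuousLinearMap.adjoint T ∘L T)

lemma adjoint_comp_self_eq_star_mul (T : E →L[ℂ] E) :
    ContinuousLinearMap.adjoint T ∘L T = star T * T := by
  rw [ContinuousLinearMap.star_eq_adjoint, ContinuousLinearMap.mul_def]

lemma isSelfAdjoint_adjoint_comp_self (T : E →L[ℂ] E) :
    IsSelfAdjoint (ContinuousLinearMap.adjoint T ∘L T) := by
  rw [adjoint_comp_self_eq_star_mul]; exact IsSelfAdjoint.star_mul_self T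

lemma spectrum_adjoint_comp_self_nonneg (T : E →L[ℂ] E) :
    ∀ x ∈ spectrum ℝ (ContinuousLinearMap.adjoint T ∘L T), 0 ≤ x := by
  rw [adjoint_comp_self_eq_star_mul]; exact spectrum_star_mul_self_nonneg

lemma fourthRoot_sa (T : E →L[ℂ] E) : IsSelfAdjoint (fourthRoot T) := IsSelfAdjoint.cfc

lemma absOp_sa (T : E →L[ℂ] E) : IsSelfAdjoint (absOp T) := IsSelfAdjoint.cfc

lemma fourthRoot_mul_self (T : E →L[ℂ] E) : fourthRoot T * fourthRoot T = absOp T := by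
  unfold fourthRoot absOp
  rw [← cfc_mul (hf := by fun_prop) (hg := by fun_prop)]
  apply cfc_congr
  intro x _
  exact Real.mul_self_sqrt (Real.sqrt_nonneg x)

lemma absOp_mul_self (T : E →L[ℂ] E) :
    absOp T * absOp T = ContinuousLinearMap.adjoint T ∘L T := by
  unfold absOp
  rw [← cfc_mul (hf := by fun_prop) (hg := by fun_prop)]
  calc cfc (fun x => Real.sqrt x * Real.sqrt x) (ContinuousLinearMap.adjoint T ∘L T)
      = cfc (id : ℝ → ℝ) (ContinuousLinearMap.adjoint T ∘L T) := by
        apply cfc_congr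
        intro x hx
        exact Real.mul_self_sqrt (spectrum_adjoint_comp_self_nonneg T x hx)
    _ = _ := cfc_id ℝ _ (isSelfAdjoint_adjoint_comp_self T)

lemma absOp_nonneg (T : E →L[ℂ] E) : 0 ≤ absOp T :=
  cfc_nonneg fun x _ => Real.sqrt_nonneg x

lemma norm_absOp_apply (T : E →L[ℂ] E) (u : E) : ‖absOp T u‖ = ‖T u‖ := by
  have hS : ContinuousLinearMap.adjoint (absOp T) = absOp T :=
    ContinuousLinearMap.isSelfAdjoint_iff'.mp (absOp_sa T)
  have h1 : ‖absOp T u‖ ^ 2 = ‖T u‖ ^ 2 := by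
    rw [norm_sq_eq_re_inner (absOp T) u, norm_sq_eq_re_inner T u, hS,
      ← ContinuousLinearMap.mul_def, absOp_mul_self]
  have := congrArg Real.sqrt h1
  rwa [Real.sqrt_sq (norm_nonneg _), Real.sqrt_sq (norm_nonneg _)] at this

lemma diag_eq_sq_fourthRoot (T : E →L[ℂ] E) (u : E) :
    (inner ℂ u (absOp T u) : ℂ).re = ‖fourthRoot T u‖ ^ 2 := by
  have hR : ContinuousLinearMap.adjoint (fourthRoot T) = fourthRoot T :=
    ContinuousLinearMap.isSelfAdjoint_iff'.mp (fourthRoot_sa T)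
  rw [norm_sq_eq_re_inner (fourthRoot T) u, hR, ← ContinuousLinearMap.mul_def,
    fourthRoot_mul_self]

lemma isTraceClassAlong_iff (b : HilbertBasis ι ℂ E) (T : E →L[ℂ] E) :
    IsTraceClassAlong b T ↔ Summable fun i => ‖fourthRoot T (b i)‖ ^ 2 := by
  unfold IsTraceClassAlong
  constructor <;> intro h <;> [skip; skip] <;>
    · refine h.congr fun i => ?_
      first
        | exact (diag_eq_sq_fourthRoot T (b i))
        | exact (diag_eq_sq_fourthRoot T (b i)).symm

lemma traceNormAlong_eq (b : HilbertBasis ι ℂ E) (T : E →L[ℂ] E) :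
    traceNormAlong b T = ∑' i, ‖fourthRoot T (b i)‖ ^ 2 :=
  tsum_congr fun i => diag_eq_sq_fourthRoot T (b i)

lemma traceNormAlong_nonneg (b : HilbertBasis ι ℂ E) (T : E →L[ℂ] E) :
    0 ≤ traceNormAlong b T := by
  rw [traceNormAlong_eq]
  exact tsum_nonneg fun i => by positivity

/-- Operator norm bound by trace norm. -/
lemma norm_apply_le_traceNorm (b : HilbertBasis ι ℂ E) (T : E →L[ℂ] E)
    (h : IsTraceClassAlong b T) (u : E) :
    ‖T u‖ ≤ traceNormAlong b T * ‖u‖ := by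
  have hs := (isTraceClassAlong_iff b T).mp h
  set t := ∑' i, ‖fourthRoot T (b i)‖ ^ 2 with ht
  have ht0 : 0 ≤ t := tsum_nonneg fun i => by positivity
  have hb := norm_apply_le_of_hs b hs
  have hTu : ‖T u‖ = ‖fourthRoot T (fourthRoot T u)‖ := by
    rw [← norm_absOp_apply, ← fourthRoot_mul_self, ContinuousLinearMap.mul_apply]
  rw [hTu, traceNormAlong_eq]
  calc ‖fourthRoot T (fourthRoot T u)‖ ≤ Real.sqrt t * ‖fourthRoot T u‖ := hb _
    _ ≤ Real.sqrt t * (Real.sqrt t * ‖u‖) := by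
        apply mul_le_mul_of_nonneg_left (hb u) (Real.sqrt_nonneg t)
    _ = t * ‖u‖ := by rw [← mul_assoc, Real.mul_self_sqrt ht0]

lemma absOp_neg (T : E →L[ℂ] E) : absOp (-T) = absOp T := by
  unfold absOp
  congr 1
  rw [map_neg]
  simp

lemma fourthRoot_neg (T : E →L[ℂ] E) : fourthRoot (-T) = fourthRoot T := by
  unfold fourthRoot
  congr 1
  rw [map_neg]
  simp

lemma isTraceClassAlong_neg (b : HilbertBasis ι ℂ E) (T : E →L[ℂ] E)
    (h : IsTraceClassAlong b T) : IsTraceClassAlong b (-T) := by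
  unfold IsTraceClassAlong at h ⊢
  rw [absOp_neg]
  exact h

lemma traceNormAlong_neg (b : HilbertBasis ι ℂ E) (T : E →L[ℂ] E) :
    traceNormAlong b (-T) = traceNormAlong b T := by
  unfold traceNormAlong
  rw [absOp_neg]

lemma eq_zero_of_traceNormAlong_eq_zero (b : HilbertBasis ι ℂ E) (T : E →L[ℂ] E)
    (h : IsTraceClassAlong b T) (h0 : traceNormAlong b T = 0) : T = 0 := by
  have hs := (isTraceClassAlong_iff b T).mp h
  rw [traceNormAlong_eq] at h0
  have hz : ∀ i, ‖fourthRoot T (b i)‖ ^ 2 = 0 := by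
    intro i
    have h1 : ‖fourthRoot T (b i)‖ ^ 2 ≤ 0 := h0 ▸ Summable.le_tsum hs i fun j _ => by positivity
    have h2 : (0:ℝ) ≤ ‖fourthRoot T (b i)‖ ^ 2 := by positivity
    linarith
  have hR : fourthRoot T = 0 := by
    apply eq_zero_of_forall_basis b
    intro i
    have := hz i
    rwa [pow_eq_zero_iff (by norm_num), norm_eq_zero] at this
  ext u
  have : ‖T u‖ = 0 := by
    rw [← norm_absOp_apply, ← fourthRoot_mul_self, ContinuousLinearMap.mul_apply, hR]
    simp
  simpa [norm_eq_zero] using this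

end CFCFacts

section Ideal
variable {ι E : Type*} [NormedAddCommGroup E] [InnerProductSpace ℂ E] [CompleteSpace E]

lemma norm_apply_le_of_star_mul_le {Z N : E →L[ℂ] E} (hN : IsSelfAdjoint N)
    (h : star Z * Z ≤ star N * N) (v : E) : ‖Z v‖ ≤ ‖N v‖ := by
  have h1 : ‖Z v‖ ^ 2 ≤ ‖N v‖ ^ 2 := by
    rw [norm_sq_eq_re_inner Z v, norm_sq_eq_re_inner N v,
      adjoint_comp_self_eq_star_mul, adjoint_comp_self_eq_star_mul]
    exact re_inner_le_of_le h v
  have := Real.sqrt_le_sqrt h1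
  rwa [Real.sqrt_sq (norm_nonneg _), Real.sqrt_sq (norm_nonneg _)] at this

/-- Pointwise bound used twice below. -/
lemma aux_sq_le {δ x : ℝ} (hδ : 0 < δ) (hx : 0 ≤ x) :
    (Real.sqrt (Real.sqrt x) + δ)⁻¹ * x * (Real.sqrt (Real.sqrt x) + δ)⁻¹
      ≤ Real.sqrt x := by
  set s := Real.sqrt x with hs
  set t := Real.sqrt s with htdef
  have hs0 : 0 ≤ s := Real.sqrt_nonneg x
  have ht0 : 0 ≤ t := Real.sqrt_nonneg s
  have ht2 : t ^ 2 = s := Real.sq_sqrt hs0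
  have hs2 : s ^ 2 = x := Real.sq_sqrt hx
  set e := (t + δ)⁻¹ with he
  have hte : 0 < t + δ := by positivity
  have he0 : 0 ≤ e := by positivity
  have hcancel : e * (t + δ) = 1 := inv_mul_cancel₀ (ne_of_gt hte)
  have h1 : t * e ≤ 1 := by nlinarith [mul_nonneg hδ.le he0]
  have h2 : s * e ≤ t := by nlinarith [mul_le_mul_of_nonneg_left h1 ht0]
  have h3 : (s * e) ^ 2 ≤ s := by
    nlinarith [mul_self_le_mul_self (mul_nonneg hs0 he0) h2]
  calc e * x * e = (s * e) ^ 2 := by rw [← hs2]; ring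
    _ ≤ s := h3

lemma norm_basis (b : HilbertBasis ι ℂ E) (i : ι) : ‖b i‖ = 1 := b.orthonormal.1 i

set_option maxHeartbeats 2000000 in
/-- Key estimate: one half of the trace-norm triangle inequality argument. -/
lemma key_half (b : HilbertBasis ι ℂ E) (A G : E →L[ℂ] E) (hG : ‖G‖ ≤ 1)
    (hA : IsTraceClassAlong b A) (F : Finset ι) {δ : ℝ} (hδ : 0 < δ) :
    ∑ i ∈ F, ((inner ℂ (G (b i)) (A (b i)) : ℂ)).re ≤
      traceNormAlong b A +
        δ * Real.sqrt (Real.sqrt ‖ContinuousLinearMap.adjoint A ∘L A‖) * F.card := by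
  set PA := ContinuousLinearMap.adjoint A ∘L A with hPA
  have hPAdef : star A * A = PA := by rw [hPA, adjoint_comp_self_eq_star_mul]
  have hPAsa : IsSelfAdjoint PA := isSelfAdjoint_adjoint_comp_self A
  have hPAspec : ∀ x ∈ spectrum ℝ PA, 0 ≤ x := spectrum_adjoint_comp_self_nonneg A
  set NA := fourthRoot A with hNA
  have hNAsa : IsSelfAdjoint NA := fourthRoot_sa A
  set tA := traceNormAlong b A with htA
  have htA0 : 0 ≤ tA := traceNormAlong_nonneg b A
  set cA := Real.sqrt (Real.sqrt ‖PA‖) with hcA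
  have hcA0 : 0 ≤ cA := Real.sqrt_nonneg _
  have hcA2 : cA ^ 2 = Real.sqrt ‖PA‖ := Real.sq_sqrt (Real.sqrt_nonneg _)
  -- continuity facts
  have hden : ∀ x : ℝ, Real.sqrt (Real.sqrt x) + δ ≠ 0 := fun x => by positivity
  have hcontss : Continuous fun x : ℝ => Real.sqrt (Real.sqrt x) :=
    Real.continuous_sqrt.comp Real.continuous_sqrt
  have hcu : Continuous fun x : ℝ => (Real.sqrt (Real.sqrt x) + δ)⁻¹ :=
    (hcontss.add continuous_const).inv₀ hden
  set uf : ℝ → ℝ := fun x => (Real.sqrt (Real.sqrt x) + δ)⁻¹ with huf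
  set Uδ : E →L[ℂ] E := cfc uf PA with hUδ
  have hUδsa : IsSelfAdjoint Uδ := IsSelfAdjoint.cfc
  set Eδ : E →L[ℂ] E := cfc (fun x => δ * uf x) PA with hEδ
  have hEδsa : IsSelfAdjoint Eδ := IsSelfAdjoint.cfc
  have hcsu : Continuous fun x : ℝ => uf x * Real.sqrt (Real.sqrt x) := hcu.mul hcontss
  have hcdu : Continuous fun x : ℝ => δ * uf x := continuous_const.mul hcu
  -- decomposition A = A * (Uδ * NA) + A * Eδ
  have hone : Uδ * NA + Eδ = 1 := by
    rw [hUδ, hEδ, hNA]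
    unfold fourthRoot
    rw [← hPA, ← cfc_mul uf _ PA (hf := hcu.continuousOn) (hg := hcontss.continuousOn),
      ← cfc_add PA _ _ (hf := hcsu.continuousOn) (hg := hcdu.continuousOn)]
    calc cfc (fun x => uf x * Real.sqrt (Real.sqrt x) + δ * uf x) PA
        = cfc (fun _ : ℝ => (1:ℝ)) PA := by
          apply cfc_congr
          intro x _
          have h0 : (Real.sqrt (Real.sqrt x) + δ) * uf x = 1 :=
            mul_inv_cancel₀ (hden x)
          linear_combination h0
      _ = 1 := by rw [cfc_const 1 PA hPAsa, map_one]
  have hdecomp : A = A * (Uδ * NA) + A * Eδ := by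
    rw [← mul_add, hone, mul_one]
  -- the compressed square bound : star (A*Uδ) * (A*Uδ) ≤ star NA * NA
  have hZle : star (A * Uδ) * (A * Uδ) ≤ star NA * NA := by
    have e1 : star (A * Uδ) * (A * Uδ) = Uδ * (cfc (fun x => x * uf x) PA) := by
      calc star (A * Uδ) * (A * Uδ) = Uδ * (star A * A) * Uδ := by
            rw [star_mul, hUδsa.star_eq]; noncomm_ring
        _ = Uδ * (PA * Uδ) := by rw [hPAdef, mul_assoc]
        _ = Uδ * (cfc (fun x => x * uf x) PA) := by
            congr 1
            conv_lhs => rw [← cfc_id' ℝ PA hPAsa]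
            exact (cfc_mul (fun x : ℝ => x) uf PA (hf := continuous_id.continuousOn)
              (hg := hcu.continuousOn)).symm
    have e1b : Uδ * (cfc (fun x => x * uf x) PA) = cfc (fun x => uf x * (x * uf x)) PA := by
      rw [hUδ]
      exact (cfc_mul uf (fun x => x * uf x) PA (hf := hcu.continuousOn)
        (hg := (continuous_id.mul hcu).continuousOn)).symm
    rw [e1, e1b]
    have e2 : star NA * NA = cfc Real.sqrt PA := by
      rw [hNAsa.star_eq, hNA, fourthRoot_mul_self]
      unfold absOp
      rw [hPA]
    rw [e2]
    apply cfc_mono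
    · intro x hx
      have := aux_sq_le hδ (hPAspec x hx)
      calc uf x * (x * uf x) = uf x * x * uf x := by ring
        _ ≤ Real.sqrt x := this
    · exact (hcu.mul (continuous_id.mul hcu)).continuousOn
    · exact Real.continuous_sqrt.continuousOn
  have hZ : ∀ v : E, ‖(A * Uδ) v‖ ≤ ‖NA v‖ :=
    norm_apply_le_of_star_mul_le hNAsa hZle
  -- bound for the error term A * Eδ
  have herr : ∀ v : E, ‖(A * Eδ) v‖ ≤ δ * cA * ‖v‖ := by
    intro v
    have h2 : star (A * Eδ) * (A * Eδ) = Eδ * (cfc (fun x => x * (δ * uf x)) PA) := by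
      calc star (A * Eδ) * (A * Eδ) = Eδ * (star A * A) * Eδ := by
            rw [star_mul, hEδsa.star_eq]; noncomm_ring
        _ = Eδ * (PA * Eδ) := by rw [hPAdef, mul_assoc]
        _ = _ := by
            congr 1
            conv_lhs => rw [← cfc_id' ℝ PA hPAsa]
            exact (cfc_mul (fun x : ℝ => x) (fun x => δ * uf x) PA
              (hf := continuous_id.continuousOn) (hg := hcdu.continuousOn)).symm
    have h2b : Eδ * (cfc (fun x => x * (δ * uf x)) PA)
        = cfc (fun x => δ * uf x * (x * (δ * uf x))) PA := by
      rw [hEδ]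
      exact (cfc_mul (fun x => δ * uf x) (fun x => x * (δ * uf x)) PA
        (hf := hcdu.continuousOn) (hg := (continuous_id.mul hcdu).continuousOn)).symm
    have h3 : star (A * Eδ) * (A * Eδ) ≤ (δ ^ 2 * Real.sqrt ‖PA‖) • (1 : E →L[ℂ] E) := by
      rw [h2, h2b]
      calc cfc (fun x => δ * uf x * (x * (δ * uf x))) PA
          ≤ cfc (fun _ : ℝ => δ ^ 2 * Real.sqrt ‖PA‖) PA := by
            apply cfc_mono
            · intro x hx
              have hx0 := hPAspec x hx
              have hb1 := aux_sq_le hδ hx0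
              have hb2 : Real.sqrt x ≤ Real.sqrt ‖PA‖ := by
                apply Real.sqrt_le_sqrt
                have h6 := spectrum.subset_closedBall_norm_mul (𝕜 := ℝ) PA hx
                rw [Metric.mem_closedBall, Real.dist_eq, sub_zero] at h6
                have h7 : ‖(1 : E →L[ℂ] E)‖ ≤ 1 := by
                  rw [ContinuousLinearMap.one_def]
                  exact ContinuousLinearMap.norm_id_le
                have h8 : x ≤ |x| := le_abs_self x
                nlinarith [norm_nonneg PA]
              have huf0 : 0 ≤ uf x := by
                rw [huf]; positivity
              calc δ * uf x * (x * (δ * uf x)) = δ ^ 2 * (uf x * x * uf x) := by ring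
                _ ≤ δ ^ 2 * Real.sqrt x := by nlinarith
                _ ≤ δ ^ 2 * Real.sqrt ‖PA‖ := by nlinarith
            · exact (hcdu.mul (continuous_id.mul hcdu)).continuousOn
            · exact continuous_const.continuousOn
        _ = (δ ^ 2 * Real.sqrt ‖PA‖) • 1 := by
            rw [cfc_const _ PA hPAsa, Algebra.algebraMap_eq_smul_one]
    have hsq : ‖(A * Eδ) v‖ ^ 2 ≤ δ ^ 2 * Real.sqrt ‖PA‖ * ‖v‖ ^ 2 := by
      have h1 : ‖(A * Eδ) v‖ ^ 2 = ((inner ℂ v ((star (A * Eδ) * (A * Eδ)) v) : ℂ)).re := by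
        rw [norm_sq_eq_re_inner (A * Eδ) v, adjoint_comp_self_eq_star_mul]
      rw [h1]
      have h4 := re_inner_le_of_le h3 v
      have h5 : ((inner ℂ v (((δ ^ 2 * Real.sqrt ‖PA‖) • (1 : E →L[ℂ] E)) v) : ℂ)).re
          = δ ^ 2 * Real.sqrt ‖PA‖ * ‖v‖ ^ 2 := by
        rw [ContinuousLinearMap.smul_apply, ContinuousLinearMap.one_apply]
        rw [show (δ ^ 2 * Real.sqrt ‖PA‖) • v = ((δ ^ 2 * Real.sqrt ‖PA‖ : ℝ) : ℂ) • v from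
          (RCLike.real_smul_eq_coe_smul (K := ℂ) _ _)]
        rw [inner_smul_right]
        rw [Complex.re_ofReal_mul]
        have := inner_self_eq_norm_mul_norm (𝕜 := ℂ) v
        simp only [RCLike.re_to_complex] at this
        rw [this]; ring
      linarith [h4, h5.le, h5.ge]
    have hrhs : δ * cA * ‖v‖ = Real.sqrt (δ ^ 2 * Real.sqrt ‖PA‖ * ‖v‖ ^ 2) := by
      rw [show δ ^ 2 * Real.sqrt ‖PA‖ * ‖v‖ ^ 2 = (δ * cA * ‖v‖) ^ 2 by
        rw [← hcA2]; ring]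
      rw [Real.sqrt_sq (by positivity)]
    rw [hrhs]
    calc ‖(A * Eδ) v‖ = Real.sqrt (‖(A * Eδ) v‖ ^ 2) := (Real.sqrt_sq (norm_nonneg _)).symm
      _ ≤ _ := Real.sqrt_le_sqrt hsq
  -- summability data
  have hsNA : Summable fun i => ‖NA (b i)‖ ^ 2 := (isTraceClassAlong_iff b A).mp hA
  have htAeq : tA = ∑' i, ‖NA (b i)‖ ^ 2 := traceNormAlong_eq b A
  -- the operator W
  set W : E →L[ℂ] E := star (A * Uδ) * G with hW
  have hWstar : star W = star G * (A * Uδ) := by rw [hW, star_mul, star_star]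
  have hWb : ∀ i, ‖star W (b i)‖ ≤ ‖NA (b i)‖ := by
    intro i
    rw [hWstar, ContinuousLinearMap.mul_apply]
    calc ‖star G ((A * Uδ) (b i))‖ ≤ ‖star G‖ * ‖(A * Uδ) (b i)‖ :=
          (star G).le_opNorm _
      _ ≤ 1 * ‖NA (b i)‖ := by
          apply mul_le_mul _ (hZ _) (norm_nonneg _) zero_le_one
          rw [norm_star]; exact hG
      _ = ‖NA (b i)‖ := one_mul _
  have hWsum : ∀ F' : Finset ι, ∑ i ∈ F', ‖W (b i)‖ ^ 2 ≤ tA := by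
    intro F'
    have hchain : ENNReal.ofReal (∑ i ∈ F', ‖W (b i)‖ ^ 2) ≤ ENNReal.ofReal tA := by
      rw [ENNReal.ofReal_sum_of_nonneg (fun i _ => by positivity)]
      calc ∑ i ∈ F', ENNReal.ofReal (‖W (b i)‖ ^ 2)
          ≤ ∑' i, ENNReal.ofReal (‖W (b i)‖ ^ 2) := ENNReal.sum_le_tsum F'
        _ = ehs b W := rfl
        _ = ehs b (ContinuousLinearMap.adjoint W) := ehs_adjoint b b W
        _ ≤ ∑' i, ENNReal.ofReal (‖NA (b i)‖ ^ 2) := by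
            apply ENNReal.tsum_le_tsum
            intro i
            apply ENNReal.ofReal_le_ofReal
            have : ContinuousLinearMap.adjoint W (b i) = star W (b i) := by
              rw [ContinuousLinearMap.star_eq_adjoint]
            rw [this]
            exact pow_le_pow_left₀ (norm_nonneg _) (hWb i) 2
        _ = ENNReal.ofReal tA := by
            rw [htAeq, ENNReal.ofReal_tsum_of_nonneg (fun i => by positivity) hsNA]
    exact (ENNReal.ofReal_le_ofReal_iff htA0).mp hchain
  -- main term bound via Cauchy–Schwarz
  have hmain : ∑ i ∈ F, ((inner ℂ (G (b i)) ((A * (Uδ * NA)) (b i)) : ℂ)).re ≤ tA := by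
    have hterm : ∀ i, ((inner ℂ (G (b i)) ((A * (Uδ * NA)) (b i)) : ℂ)).re
        ≤ ‖W (b i)‖ * ‖NA (b i)‖ := by
      intro i
      have e1 : (A * (Uδ * NA)) (b i) = (A * Uδ) (NA (b i)) := by
        rw [← mul_assoc, ContinuousLinearMap.mul_apply]
      have e2 : (inner ℂ (G (b i)) ((A * Uδ) (NA (b i))) : ℂ)
          = inner ℂ (W (b i)) (NA (b i)) := by
        rw [hW, ContinuousLinearMap.mul_apply, ContinuousLinearMap.star_eq_adjoint]
        exact (ContinuousLinearMap.adjoint_inner_left (A * Uδ) (NA (b i)) (G (b i))).symm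
      rw [e1, e2]
      calc (inner ℂ (W (b i)) (NA (b i)) : ℂ).re ≤ ‖(inner ℂ (W (b i)) (NA (b i)) : ℂ)‖ :=
            Complex.re_le_norm _
        _ ≤ ‖W (b i)‖ * ‖NA (b i)‖ := norm_inner_le_norm _ _
    calc ∑ i ∈ F, ((inner ℂ (G (b i)) ((A * (Uδ * NA)) (b i)) : ℂ)).re
        ≤ ∑ i ∈ F, ‖W (b i)‖ * ‖NA (b i)‖ := Finset.sum_le_sum fun i _ => hterm i
      _ ≤ tA := by
        have hcs := Finset.sum_mul_sq_le_sq_mul_sq F (fun i => ‖W (b i)‖)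
          (fun i => ‖NA (b i)‖)
        have h0 : (0:ℝ) ≤ ∑ i ∈ F, ‖W (b i)‖ * ‖NA (b i)‖ :=
          Finset.sum_nonneg fun i _ => by positivity
        have hB : ∑ i ∈ F, ‖NA (b i)‖ ^ 2 ≤ tA := by
          rw [htAeq]
          exact Summable.sum_le_tsum F (fun i _ => by positivity) hsNA
        have hsq : (∑ i ∈ F, ‖W (b i)‖ * ‖NA (b i)‖) ^ 2 ≤ tA * tA := by
          calc (∑ i ∈ F, ‖W (b i)‖ * ‖NA (b i)‖) ^ 2
              ≤ (∑ i ∈ F, ‖W (b i)‖ ^ 2) * ∑ i ∈ F, ‖NA (b i)‖ ^ 2 := hcs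
            _ ≤ tA * tA := by
                apply mul_le_mul (hWsum F) hB
                  (Finset.sum_nonneg fun i _ => by positivity) htA0
        nlinarith
  -- error term bound
  have herrsum : ∑ i ∈ F, ((inner ℂ (G (b i)) ((A * Eδ) (b i)) : ℂ)).re
      ≤ δ * cA * F.card := by
    have hterm : ∀ i, ((inner ℂ (G (b i)) ((A * Eδ) (b i)) : ℂ)).re ≤ δ * cA := by
      intro i
      calc (inner ℂ (G (b i)) ((A * Eδ) (b i)) : ℂ).re
          ≤ ‖(inner ℂ (G (b i)) ((A * Eδ) (b i)) : ℂ)‖ := Complex.re_le_norm _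
        _ ≤ ‖G (b i)‖ * ‖(A * Eδ) (b i)‖ := norm_inner_le_norm _ _
        _ ≤ 1 * (δ * cA * 1) := by
            apply mul_le_mul _ _ (norm_nonneg _) zero_le_one
            · calc ‖G (b i)‖ ≤ ‖G‖ * ‖b i‖ := G.le_opNorm _
                _ = ‖G‖ := by rw [norm_basis b i, mul_one]
                _ ≤ 1 := hG
            · calc ‖(A * Eδ) (b i)‖ ≤ δ * cA * ‖b i‖ := herr _
                _ = δ * cA * 1 := by rw [norm_basis b i]
        _ = δ * cA := by ring
    calc ∑ i ∈ F, ((inner ℂ (G (b i)) ((A * Eδ) (b i)) : ℂ)).re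
        ≤ ∑ _i ∈ F, δ * cA := Finset.sum_le_sum fun i _ => hterm i
      _ = δ * cA * F.card := by
          rw [Finset.sum_const, nsmul_eq_mul]; ring
  -- combine
  have hsplit : ∀ i, ((inner ℂ (G (b i)) (A (b i)) : ℂ)).re
      = ((inner ℂ (G (b i)) ((A * (Uδ * NA)) (b i)) : ℂ)).re
        + ((inner ℂ (G (b i)) ((A * Eδ) (b i)) : ℂ)).re := by
    intro i
    conv_lhs => rw [hdecomp]
    rw [ContinuousLinearMap.add_apply, inner_add_right, Complex.add_re]
  calc ∑ i ∈ F, ((inner ℂ (G (b i)) (A (b i)) : ℂ)).re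
      = ∑ i ∈ F, (((inner ℂ (G (b i)) ((A * (Uδ * NA)) (b i)) : ℂ)).re
        + ((inner ℂ (G (b i)) ((A * Eδ) (b i)) : ℂ)).re) :=
        Finset.sum_congr rfl fun i _ => hsplit i
    _ = (∑ i ∈ F, ((inner ℂ (G (b i)) ((A * (Uδ * NA)) (b i)) : ℂ)).re)
        + ∑ i ∈ F, ((inner ℂ (G (b i)) ((A * Eδ) (b i)) : ℂ)).re := Finset.sum_add_distrib
    _ ≤ tA + δ * cA * F.card := add_le_add hmain herrsum

lemma re_inner_smul_one (c : ℝ) (u : E) :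
    ((inner ℂ u ((c • (1 : E →L[ℂ] E)) u) : ℂ)).re = c * ‖u‖ ^ 2 := by
  rw [ContinuousLinearMap.smul_apply, ContinuousLinearMap.one_apply,
    show c • u = ((c : ℝ) : ℂ) • u from (RCLike.real_smul_eq_coe_smul (K := ℂ) _ _),
    inner_smul_right, Complex.re_ofReal_mul]
  have := inner_self_eq_norm_mul_norm (𝕜 := ℂ) u
  simp only [RCLike.re_to_complex] at this
  rw [this]; ring

lemma norm_le_one_of_star_mul_le_one {G : E →L[ℂ] E} (h : star G * G ≤ 1) : ‖G‖ ≤ 1 := by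
  apply ContinuousLinearMap.opNorm_le_bound _ zero_le_one
  intro u
  rw [one_mul]
  have h1 : ‖G u‖ ^ 2 ≤ ‖u‖ ^ 2 := by
    rw [norm_sq_eq_re_inner G u, adjoint_comp_self_eq_star_mul]
    calc ((inner ℂ u ((star G * G) u) : ℂ)).re ≤ ((inner ℂ u ((1 : E →L[ℂ] E) u) : ℂ)).re :=
          re_inner_le_of_le h u
      _ = ‖u‖ ^ 2 := by
          rw [ContinuousLinearMap.one_apply]
          have := inner_self_eq_norm_mul_norm (𝕜 := ℂ) u
          simp only [RCLike.re_to_complex] at this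
          rw [this]; ring
  have := Real.sqrt_le_sqrt h1
  rwa [Real.sqrt_sq (norm_nonneg _), Real.sqrt_sq (norm_nonneg _)] at this

lemma exists_contraction (T : E →L[ℂ] E) {ε : ℝ} (hε : 0 < ε) :
    ∃ G : E →L[ℂ] E, ‖G‖ ≤ 1 ∧ ∀ u : E, ‖u‖ = 1 →
      ((inner ℂ u (absOp T u) : ℂ)).re ≤ ((inner ℂ (G u) (T u) : ℂ)).re + ε := by
  set P := ContinuousLinearMap.adjoint T ∘L T with hP
  have hPdef : star T * T = P := by rw [hP, adjoint_comp_self_eq_star_mul]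
  have hPsa : IsSelfAdjoint P := isSelfAdjoint_adjoint_comp_self T
  have hPspec : ∀ x ∈ spectrum ℝ P, 0 ≤ x := spectrum_adjoint_comp_self_nonneg T
  have hden : ∀ x : ℝ, Real.sqrt x + ε ≠ 0 := fun x => by positivity
  have hcq : Continuous fun x : ℝ => (Real.sqrt x + ε)⁻¹ :=
    (Real.continuous_sqrt.add continuous_const).inv₀ hden
  set qf : ℝ → ℝ := fun x => (Real.sqrt x + ε)⁻¹ with hqf
  set Q : E →L[ℂ] E := cfc qf P with hQ
  have hQsa : IsSelfAdjoint Q := IsSelfAdjoint.cfc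
  have hQadj : ContinuousLinearMap.adjoint Q = Q :=
    ContinuousLinearMap.isSelfAdjoint_iff'.mp hQsa
  refine ⟨T * Q, ?_, ?_⟩
  · apply norm_le_one_of_star_mul_le_one
    have e1 : star (T * Q) * (T * Q) = Q * (cfc (fun x => x * qf x) P) := by
      calc star (T * Q) * (T * Q) = Q * (star T * T) * Q := by
            rw [star_mul, hQsa.star_eq]; noncomm_ring
        _ = Q * (P * Q) := by rw [hPdef, mul_assoc]
        _ = _ := by
            congr 1
            conv_lhs => rw [← cfc_id' ℝ P hPsa]
            exact (cfc_mul (fun x : ℝ => x) qf P (hf := continuous_id.continuousOn)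
              (hg := hcq.continuousOn)).symm
    have e2 : Q * (cfc (fun x => x * qf x) P) = cfc (fun x => qf x * (x * qf x)) P := by
      rw [hQ]
      exact (cfc_mul qf (fun x => x * qf x) P (hf := hcq.continuousOn)
        (hg := (continuous_id.mul hcq).continuousOn)).symm
    rw [e1, e2]
    apply cfc_le_one
    intro x hx
    have hx0 := hPspec x hx
    simp only [hqf]
    set s := Real.sqrt x with hs
    have hs0 : 0 ≤ s := Real.sqrt_nonneg x
    have hs2 : s ^ 2 = x := Real.sq_sqrt hx0
    have hse : 0 < s + ε := by positivity
    have he0 : 0 ≤ (s + ε)⁻¹ := by positivity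
    have hc : (s + ε)⁻¹ * (s + ε) = 1 := inv_mul_cancel₀ (ne_of_gt hse)
    have h1 : s * (s + ε)⁻¹ ≤ 1 := by nlinarith [mul_nonneg hε.le he0]
    rw [← hs2]
    nlinarith [mul_self_le_mul_self (mul_nonneg hs0 he0) h1]
  · intro u hu
    set S := absOp T with hS
    have hstep : S ≤ cfc (fun x => qf x * x) P + ε • 1 := by
      have e3 : cfc (fun x => qf x * x + ε) P
          = cfc (fun x => qf x * x) P + ε • 1 := by
        rw [cfc_add P (fun x => qf x * x) (fun _ => ε)
          (hf := (hcq.mul continuous_id).continuousOn)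
          (hg := continuous_const.continuousOn), cfc_const _ P hPsa,
          Algebra.algebraMap_eq_smul_one]
      rw [hS, ← e3]
      unfold absOp
      rw [← hP]
      apply cfc_mono
      · intro x hx
        have hx0 := hPspec x hx
        simp only [hqf]
        set s := Real.sqrt x with hs
        have hs0 : 0 ≤ s := Real.sqrt_nonneg x
        have hs2 : s ^ 2 = x := Real.sq_sqrt hx0
        have hse : 0 < s + ε := by positivity
        have he0 : 0 ≤ (s + ε)⁻¹ := by positivity
        have hc : (s + ε)⁻¹ * (s + ε) = 1 := inv_mul_cancel₀ (ne_of_gt hse)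
        have h1 : s * (s + ε)⁻¹ ≤ 1 := by nlinarith [mul_nonneg hε.le he0]
        have h4 : s * (s + ε)⁻¹ * s + s * (s + ε)⁻¹ * ε = s := by
          linear_combination s * hc
        rw [← hs2]
        nlinarith [mul_nonneg hs0 he0, hε.le]
      · exact Real.continuous_sqrt.continuousOn
      · exact ((hcq.mul continuous_id).add continuous_const).continuousOn
    have h4 := re_inner_le_of_le hstep u
    have h5 : ((inner ℂ u ((cfc (fun x => qf x * x) P + ε • (1 : E →L[ℂ] E)) u) : ℂ)).re
        = ((inner ℂ u ((cfc (fun x => qf x * x) P) u) : ℂ)).re + ε := by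
      rw [ContinuousLinearMap.add_apply, inner_add_right, Complex.add_re,
        re_inner_smul_one, hu]
      ring
    have h6 : ((inner ℂ u ((cfc (fun x => qf x * x) P) u) : ℂ)).re
        = ((inner ℂ ((T * Q) u) (T u) : ℂ)).re := by
      have e4 := cfc_mul qf (fun x : ℝ => x) P (hf := hcq.continuousOn)
        (hg := continuous_id.continuousOn)
      rw [cfc_id' ℝ P hPsa, ← hQ] at e4
      rw [e4]
      have e5 : (Q * P) u = Q (P u) := ContinuousLinearMap.mul_apply _ _ _
      rw [e5]
      have e6 : (inner ℂ u (Q (P u)) : ℂ) = inner ℂ (Q u) (P u) := by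
        conv_rhs => rw [← hQadj]
        exact (ContinuousLinearMap.adjoint_inner_left Q (P u) u).symm
      rw [e6]
      have e7 : (inner ℂ (Q u) (P u) : ℂ) = inner ℂ (T (Q u)) (T u) := by
        rw [hP, ContinuousLinearMap.comp_apply]
        exact ContinuousLinearMap.adjoint_inner_right T (Q u) (T u)
      rw [e7, ContinuousLinearMap.mul_apply]
    linarith [h4, h5.le, h6.le, h6.ge]

set_option maxHeartbeats 1000000 in
/-- Trace class along a basis is closed under addition. -/
lemma isTraceClassAlong_add (b : HilbertBasis ι ℂ E) {A B : E →L[ℂ] E}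
    (hA : IsTraceClassAlong b A) (hB : IsTraceClassAlong b B) :
    IsTraceClassAlong b (A + B) := by
  set T := A + B with hT
  set cA := Real.sqrt (Real.sqrt ‖ContinuousLinearMap.adjoint A ∘L A‖) with hcA
  set cB := Real.sqrt (Real.sqrt ‖ContinuousLinearMap.adjoint B ∘L B‖) with hcB
  have hcA0 : 0 ≤ cA := Real.sqrt_nonneg _
  have hcB0 : 0 ≤ cB := Real.sqrt_nonneg _
  apply summable_of_sum_le (c := traceNormAlong b A + traceNormAlong b B)
  · intro i
    dsimp only
    rw [diag_eq_sq_fourthRoot]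
    positivity
  · intro F
    apply le_of_forall_pos_le_add
    intro η hη
    set n := (F.card : ℝ) with hn
    have hn0 : 0 ≤ n := Nat.cast_nonneg _
    set K := cA + cB + 1 with hK
    have hK1 : 1 ≤ K := by rw [hK]; linarith
    have hK0 : 0 < K := lt_of_lt_of_le zero_lt_one hK1
    set ε := η / ((n + 1) * K) with hε
    have hεpos : 0 < ε :=
      div_pos hη (mul_pos (by linarith : (0:ℝ) < n + 1) hK0)
    obtain ⟨G, hG1, hG2⟩ := exists_contraction T hεpos
    have step1 : ∑ i ∈ F, ((inner ℂ (b i) (absOp T (b i)) : ℂ)).re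
        ≤ ∑ i ∈ F, (((inner ℂ (G (b i)) (T (b i)) : ℂ)).re + ε) :=
      Finset.sum_le_sum fun i _ => hG2 (b i) (norm_basis b i)
    have step2 : ∑ i ∈ F, (((inner ℂ (G (b i)) (T (b i)) : ℂ)).re + ε)
        = ∑ i ∈ F, ((inner ℂ (G (b i)) (A (b i)) : ℂ)).re
          + ∑ i ∈ F, ((inner ℂ (G (b i)) (B (b i)) : ℂ)).re + ε * n := by
      rw [Finset.sum_add_distrib, Finset.sum_const, nsmul_eq_mul]
      have : ∀ i, ((inner ℂ (G (b i)) (T (b i)) : ℂ)).re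
          = ((inner ℂ (G (b i)) (A (b i)) : ℂ)).re + ((inner ℂ (G (b i)) (B (b i)) : ℂ)).re := by
        intro i
        rw [hT, ContinuousLinearMap.add_apply, inner_add_right, Complex.add_re]
      rw [Finset.sum_congr rfl fun i _ => this i, Finset.sum_add_distrib]
      ring
    have step3 := key_half b A G hG1 hA F hεpos
    have step4 := key_half b B G hG1 hB F hεpos
    have harith : ε * n + (ε * cA * n + ε * cB * n) ≤ η := by
      have h1 : ε * ((n + 1) * K) = η := by
        rw [hε]
        exact div_mul_cancel₀ η (ne_of_gt (mul_pos (by linarith : (0:ℝ) < n + 1) hK0))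
      have h2 : ε * n + (ε * cA * n + ε * cB * n) = ε * (n * K) := by
        rw [hK]; ring
      have h3 : ε * (n * K) ≤ ε * ((n + 1) * K) := by
        apply mul_le_mul_of_nonneg_left _ hεpos.le
        apply mul_le_mul_of_nonneg_right _ hK0.le
        linarith
      linarith
    calc ∑ i ∈ F, ((inner ℂ (b i) (absOp T (b i)) : ℂ)).re
        ≤ ∑ i ∈ F, ((inner ℂ (G (b i)) (A (b i)) : ℂ)).re
          + ∑ i ∈ F, ((inner ℂ (G (b i)) (B (b i)) : ℂ)).re + ε * n := by
          rw [← step2]; exact step1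
      _ ≤ (traceNormAlong b A + ε * cA * n) + (traceNormAlong b B + ε * cB * n) + ε * n := by
          have := add_le_add step3 step4
          linarith
      _ ≤ traceNormAlong b A + traceNormAlong b B + η := by linarith

end Ideal
section Util
variable {ι E F : Type*} [NormedAddCommGroup E] [InnerProductSpace ℂ E]
  [NormedAddCommGroup F] [InnerProductSpace ℂ F]

lemma hsNorm_nonneg (b : HilbertBasis ι ℂ E) (T : E →L[ℂ] F) : 0 ≤ hsNorm b T :=
  Real.sqrt_nonneg _

lemma isHS_sub (b : HilbertBasis ι ℂ E) {X Y : E →L[ℂ] F} (hX : IsHS b X) (hY : IsHS b Y) :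
    IsHS b (X - Y) := by
  unfold IsHS at *
  apply Summable.of_nonneg_of_le (fun i => by positivity) (fun i => ?_)
    (((hX.add hY)).mul_left 2)
  have h1 : ‖(X - Y) (b i)‖ ≤ ‖X (b i)‖ + ‖Y (b i)‖ := by
    rw [ContinuousLinearMap.sub_apply]
    exact norm_sub_le _ _
  have h2 : (0:ℝ) ≤ ‖X (b i)‖ := norm_nonneg _
  have h3 : (0:ℝ) ≤ ‖Y (b i)‖ := norm_nonneg _
  have h4 : (0:ℝ) ≤ ‖(X - Y) (b i)‖ := norm_nonneg _
  nlinarith [sq_nonneg (‖X (b i)‖ - ‖Y (b i)‖)]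

lemma norm_apply_le_hsNorm (b : HilbertBasis ι ℂ E) {X : E →L[ℂ] F} (h : IsHS b X) (u : E) :
    ‖X u‖ ≤ hsNorm b X * ‖u‖ :=
  norm_apply_le_of_hs b h u

lemma opNorm_le_hsNorm (b : HilbertBasis ι ℂ E) {X : E →L[ℂ] F} (h : IsHS b X) :
    ‖X‖ ≤ hsNorm b X :=
  ContinuousLinearMap.opNorm_le_bound _ (hsNorm_nonneg b X) (norm_apply_le_hsNorm b h)

lemma eq_zero_of_hsNorm_eq_zero (b : HilbertBasis ι ℂ E) {X : E →L[ℂ] F} (h : IsHS b X)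
    (h0 : hsNorm b X = 0) : X = 0 := by
  have ht0 : (0:ℝ) ≤ ∑' i, ‖X (b i)‖ ^ 2 := tsum_nonneg fun i => by positivity
  have ht : ∑' i, ‖X (b i)‖ ^ 2 = 0 := by
    have := congrArg (fun x : ℝ => x ^ 2) h0
    simpa [hsNorm, Real.sq_sqrt ht0] using this
  apply eq_zero_of_forall_basis b
  intro i
  have h1 : ‖X (b i)‖ ^ 2 ≤ 0 := ht ▸ Summable.le_tsum h i fun j _ => by positivity
  have h2 : (0:ℝ) ≤ ‖X (b i)‖ ^ 2 := by positivity
  have : ‖X (b i)‖ ^ 2 = 0 := le_antisymm h1 h2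
  rwa [pow_eq_zero_iff (by norm_num), norm_eq_zero] at this

lemma tendsto_add_const_zero {f : ℕ → ℝ} {c : ℝ} (hf : ∀ n, 0 ≤ f n) (hc : 0 ≤ c)
    (h : Filter.Tendsto (fun n => f n + c) Filter.atTop (nhds 0)) :
    c = 0 ∧ Filter.Tendsto f Filter.atTop (nhds 0) := by
  have hc' : c ≤ 0 :=
    ge_of_tendsto h (Filter.Eventually.of_forall fun n => by linarith [hf n])
  have hc0 : c = 0 := le_antisymm hc' hc
  subst hc0
  simpa using h

lemma tendsto_const_add_zero {f : ℕ → ℝ} {c : ℝ} (hf : ∀ n, 0 ≤ f n) (hc : 0 ≤ c)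
    (h : Filter.Tendsto (fun n => c + f n) Filter.atTop (nhds 0)) :
    c = 0 ∧ Filter.Tendsto f Filter.atTop (nhds 0) := by
  apply tendsto_add_const_zero hf hc
  simpa [add_comm] using h

end Util

section TraceUtil
variable {ι E : Type*} [NormedAddCommGroup E] [InnerProductSpace ℂ E] [CompleteSpace E]

lemma opNorm_le_traceNorm (b : HilbertBasis ι ℂ E) {T : E →L[ℂ] E}
    (h : IsTraceClassAlong b T) : ‖T‖ ≤ traceNormAlong b T :=
  ContinuousLinearMap.opNorm_le_bound _ (traceNormAlong_nonneg b T)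
    (norm_apply_le_traceNorm b T h)

end TraceUtil

section ConjUtil
variable (C : Hp ≃ₛₗᵢ[starRingEnd ℂ] Hm)

lemma cbar_apply (h : Hm →L[ℂ] Hp) (u : Hp) : cbar C h u = C (h (C u)) := rfl

lemma norm_cbar_le (h : Hm →L[ℂ] Hp) : ‖cbar C h‖ ≤ ‖h‖ :=
  LinearMap.mkContinuous_norm_le _ (norm_nonneg h) _

lemma cbar_sub (h h' : Hm →L[ℂ] Hp) : cbar C (h - h') = cbar C h - cbar C h' := by
  ext u
  simp [cbar_apply, ContinuousLinearMap.sub_apply, map_sub]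

lemma transp_sub (h h' : Hm →L[ℂ] Hp) : transp C (h - h') = transp C h - transp C h' := by
  unfold transp
  rw [cbar_sub, map_sub]

lemma norm_transp_le (h : Hm →L[ℂ] Hp) : ‖transp C h‖ ≤ ‖h‖ := by
  unfold transp
  calc ‖ContinuousLinearMap.adjoint (cbar C h)‖
      = ‖cbar C h‖ := by
        exact (ContinuousLinearMap.adjoint :
          (Hp →L[ℂ] Hm) ≃ₗᵢ⋆[ℂ] (Hm →L[ℂ] Hp)).norm_map (cbar C h)
    _ ≤ ‖h‖ := norm_cbar_le C h

end ConjUtil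

section Block

/-- Injection of a pair into `FullH`. -/
def inj (a : Hp) (c : Hm) : FullH Hp Hm :=
  (WithLp.prodContinuousLinearEquiv 2 ℂ Hp Hm).symm (a, c)

lemma inj_surj (u : FullH Hp Hm) :
    ∃ (a : Hp) (c : Hm), u = inj a c := by
  refine ⟨(WithLp.prodContinuousLinearEquiv 2 ℂ Hp Hm u).1,
    (WithLp.prodContinuousLinearEquiv 2 ℂ Hp Hm u).2, ?_⟩
  unfold inj
  rw [show ((WithLp.prodContinuousLinearEquiv 2 ℂ Hp Hm u).1,
      (WithLp.prodContinuousLinearEquiv 2 ℂ Hp Hm u).2)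
      = WithLp.prodContinuousLinearEquiv 2 ℂ Hp Hm u from rfl]
  rw [ContinuousLinearEquiv.symm_apply_apply]

lemma ext_inj {X Y : FullH Hp Hm →L[ℂ] FullH Hp Hm}
    (h : ∀ (a : Hp) (c : Hm), X (inj a c) = Y (inj a c)) : X = Y := by
  ext u
  obtain ⟨a, c, rfl⟩ := inj_surj u
  exact h a c

lemma inj_inner (a a' : Hp) (c c' : Hm) :
    (inner ℂ (inj a c) (inj a' c') : ℂ) = inner ℂ a a' + inner ℂ c c' := rfl

lemma inj_eq_iff {a a' : Hp} {c c' : Hm} : inj a c = inj a' c' ↔ a = a' ∧ c = c' := by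
  unfold inj
  rw [(WithLp.prodContinuousLinearEquiv 2 ℂ Hp Hm).symm.injective.eq_iff, Prod.mk.injEq]

lemma blockOp_inj (g : Hp →L[ℂ] Hp) (h : Hm →L[ℂ] Hp) (k : Hp →L[ℂ] Hm) (l : Hm →L[ℂ] Hm)
    (a : Hp) (c : Hm) :
    blockOp g h k l (inj a c) = inj (g a + h c) (k a + l c) := by
  unfold blockOp inj
  simp

lemma inj_add (a a' : Hp) (c c' : Hm) : inj a c + inj a' c' = inj (a + a') (c + c') := by
  unfold inj
  rw [← map_add]
  rfl

lemma Jop_inj (a : Hp) (c : Hm) :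
    Jop (inj a c) = inj (Complex.I • a) ((-Complex.I) • c) := by
  unfold Jop
  rw [blockOp_inj]
  congr 1 <;> simp

lemma blockOp_split (g : Hp →L[ℂ] Hp) (h : Hm →L[ℂ] Hp) (k : Hp →L[ℂ] Hm) (l : Hm →L[ℂ] Hm) :
    blockOp g 0 0 l + blockOp 0 h k 0 = blockOp g h k l := by
  apply ext_inj
  intro a c
  rw [ContinuousLinearMap.add_apply, blockOp_inj, blockOp_inj, blockOp_inj, inj_add,
    inj_eq_iff]
  constructor <;> · simp only [ContinuousLinearMap.zero_apply] ; abel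

lemma blockOp_injective {g g' : Hp →L[ℂ] Hp} {h h' : Hm →L[ℂ] Hp} {k k' : Hp →L[ℂ] Hm}
    {l l' : Hm →L[ℂ] Hm} (heq : blockOp g h k l = blockOp g' h' k' l') :
    g = g' ∧ h = h' := by
  constructor
  · ext a
    have := congrFun (congrArg DFunLike.coe heq) (inj a 0)
    rw [blockOp_inj, blockOp_inj] at this
    simpa using (inj_eq_iff.mp this).1
  · ext c
    have := congrFun (congrArg DFunLike.coe heq) (inj 0 c)
    rw [blockOp_inj, blockOp_inj] at this
    simpa using (inj_eq_iff.mp this).1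

end Block

/-- In `sp₁,₂(V,Ω)`, the diagonal subalgebra `u₁(H₊)` admits the closed
complement `m` of symmetric off-diagonal elements: unique decomposition, and both subspaces
are closed for the `‖·‖₁ + ‖·‖₂` norm. -/
theorem sp12_decomposition {ιp ιm : Type*} (C : Hp ≃ₛₗᵢ[starRingEnd ℂ] Hm)
    (bp : HilbertBasis ιp ℂ Hp) (bm : HilbertBasis ιm ℂ Hm)
    (X : FullH Hp Hm →L[ℂ] FullH Hp Hm)
    (A₁ : Hp →L[ℂ] Hp) (A₂ : Hm →L[ℂ] Hp)
    (hX : X = blockOp A₁ A₂ (cbar C A₂) (dbar C A₁))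
    (hTC : IsTraceClassAlong bp A₁) (hHS : IsHS bm A₂)
    (hsp : ContinuousLinearMap.adjoint X ∘L Jop + Jop ∘L X = 0) :
    (∃! p : (Hp →L[ℂ] Hp) × (Hm →L[ℂ] Hp),
      (ContinuousLinearMap.adjoint p.1 = -p.1 ∧ IsTraceClassAlong bp p.1) ∧
      (transp C p.2 = p.2 ∧ IsHS bm p.2) ∧
      X = blockOp p.1 0 0 (dbar C p.1) + blockOp 0 p.2 (cbar C p.2) 0) ∧
    -- `u₁(H₊)` is closed in the `‖·‖₁ + ‖·‖₂` norm
    (∀ (D : ℕ → Hp →L[ℂ] Hp) (C₁ : Hp →L[ℂ] Hp) (C₂ : Hm →L[ℂ] Hp),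
      (∀ n, ContinuousLinearMap.adjoint (D n) = -(D n) ∧ IsTraceClassAlong bp (D n)) →
      IsTraceClassAlong bp C₁ → IsHS bm C₂ →
      Filter.Tendsto (fun n => traceNormAlong bp (D n - C₁) + hsNorm bm C₂)
        Filter.atTop (nhds 0) →
      (ContinuousLinearMap.adjoint C₁ = -C₁ ∧ C₂ = 0)) ∧
    -- `m` is closed in the `‖·‖₁ + ‖·‖₂` norm
    (∀ (E : ℕ → Hm →L[ℂ] Hp) (C₁ : Hp →L[ℂ] Hp) (C₂ : Hm →L[ℂ] Hp),
      (∀ n, transp C (E n) = E n ∧ IsHS bm (E n)) →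
      IsTraceClassAlong bp C₁ → IsHS bm C₂ →
      Filter.Tendsto (fun n => traceNormAlong bp C₁ + hsNorm bm (E n - C₂))
        Filter.atTop (nhds 0) →
      (transp C C₂ = C₂ ∧ C₁ = 0)) := by
  refine ⟨?_, ?_, ?_⟩
  · -- unique decomposition
    have key : ∀ w v : FullH Hp Hm,
        (inner ℂ (Jop w) (X v) : ℂ) + inner ℂ (Jop (X w)) v = 0 := by
      intro w v
      have h0 : ContinuousLinearMap.adjoint X (Jop w) + Jop (X w) = 0 := by
        have := congrFun (congrArg DFunLike.coe hsp) w
        simpa using this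
      have h1 : (inner ℂ (ContinuousLinearMap.adjoint X (Jop w) + Jop (X w)) v : ℂ) = 0 := by
        rw [h0, inner_zero_left]
      rwa [inner_add_left, ContinuousLinearMap.adjoint_inner_left] at h1
    have hXp : ∀ a : Hp, X (inj a 0) = inj (A₁ a) (cbar C A₂ a) := by
      intro a
      rw [hX, blockOp_inj]
      congr 1 <;> simp
    have hXm : ∀ c : Hm, X (inj (0:Hp) c) = inj (A₂ c) (dbar C A₁ c) := by
      intro c
      rw [hX, blockOp_inj]
      congr 1 <;> simp
    have hskew : ∀ a v : Hp, (inner ℂ a (A₁ v) : ℂ) + inner ℂ (A₁ a) v = 0 := by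
      intro a v
      have h := key (inj a 0) (inj v 0)
      rw [Jop_inj, hXp v, hXp a, Jop_inj, inj_inner, inj_inner] at h
      simp only [smul_zero, inner_zero_left, inner_zero_right, add_zero,
        inner_smul_left, Complex.conj_I, map_neg] at h
      -- h : -I * ⟪a, A₁ v⟫ + -I * ⟪A₁ a, v⟫ = 0
      have h3 : (-Complex.I) * ((inner ℂ a (A₁ v) : ℂ) + inner ℂ (A₁ a) v) = 0 := by
        linear_combination h
      rcases mul_eq_zero.mp h3 with h4 | h4
      · exact absurd (neg_eq_zero.mp h4) Complex.I_ne_zero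
      · exact h4
    have hsym : ∀ (c : Hm) (v : Hp),
        (inner ℂ c (cbar C A₂ v) : ℂ) = inner ℂ (A₂ c) v := by
      intro c v
      have h := key (inj (0:Hp) c) (inj v 0)
      rw [Jop_inj, hXp v, hXm c, Jop_inj, inj_inner, inj_inner] at h
      simp only [smul_zero, inner_zero_left, inner_zero_right, add_zero, zero_add,
        inner_smul_left, Complex.conj_I, map_neg, neg_neg] at h
      -- h : I * ⟪c, cbar C A₂ v⟫ + -I * ⟪A₂ c, v⟫ = 0
      have h3 : Complex.I * ((inner ℂ c (cbar C A₂ v) : ℂ) - inner ℂ (A₂ c) v) = 0 := by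
        linear_combination h
      rcases mul_eq_zero.mp h3 with h4 | h4
      · exact absurd h4 Complex.I_ne_zero
      · linear_combination h4
    have hadj : ContinuousLinearMap.adjoint A₁ = -A₁ := by
      ext a
      apply ext_inner_right ℂ
      intro v
      rw [ContinuousLinearMap.adjoint_inner_left, ContinuousLinearMap.neg_apply,
        inner_neg_left]
      linear_combination hskew a v
    have htr : transp C A₂ = A₂ := by
      ext c
      apply ext_inner_right ℂ
      intro v
      unfold transp
      rw [ContinuousLinearMap.adjoint_inner_left]
      exact hsym c v
    refine ⟨(A₁, A₂), ⟨⟨hadj, hTC⟩, ⟨htr, hHS⟩, ?_⟩, ?_⟩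
    · rw [hX, blockOp_split]
    · rintro ⟨q₁, q₂⟩ ⟨⟨hq1, _⟩, ⟨hq2, _⟩, hqX⟩
      have heq : blockOp q₁ q₂ (cbar C q₂) (dbar C q₁)
          = blockOp A₁ A₂ (cbar C A₂) (dbar C A₁) := by
        rw [← blockOp_split, ← hqX, hX]
      obtain ⟨e1, e2⟩ := blockOp_injective heq
      simp only [Prod.mk.injEq]
      exact ⟨e1, e2⟩
  · -- u₁(H₊) is closed
    intro D C₁ C₂ hD hC₁ hC₂ hlim
    have hsplit := tendsto_add_const_zero
      (fun n => traceNormAlong_nonneg bp (D n - C₁)) (hsNorm_nonneg bm C₂) hlim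
    constructor
    · -- adjoint C₁ = -C₁
      have hTn : ∀ n, IsTraceClassAlong bp (D n - C₁) := by
        intro n
        rw [sub_eq_add_neg]
        exact isTraceClassAlong_add bp (hD n).2 (isTraceClassAlong_neg bp C₁ hC₁)
      have hkey : ∀ n, ‖ContinuousLinearMap.adjoint C₁ + C₁‖
          ≤ 2 * traceNormAlong bp (D n - C₁) := by
        intro n
        have heq : ContinuousLinearMap.adjoint C₁ + C₁
            = -(ContinuousLinearMap.adjoint (D n - C₁) + (D n - C₁)) := by
          have h2 := (hD n).1
          rw [map_sub, h2]
          abel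
        rw [heq, norm_neg]
        have hop : ‖D n - C₁‖ ≤ traceNormAlong bp (D n - C₁) :=
          opNorm_le_traceNorm bp (hTn n)
        have hadj : ‖ContinuousLinearMap.adjoint (D n - C₁)‖ = ‖D n - C₁‖ :=
          (ContinuousLinearMap.adjoint :
            (Hp →L[ℂ] Hp) ≃ₗᵢ⋆[ℂ] (Hp →L[ℂ] Hp)).norm_map (D n - C₁)
        calc ‖ContinuousLinearMap.adjoint (D n - C₁) + (D n - C₁)‖
            ≤ ‖ContinuousLinearMap.adjoint (D n - C₁)‖ + ‖D n - C₁‖ := norm_add_le _ _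
          _ = 2 * ‖D n - C₁‖ := by rw [hadj]; ring
          _ ≤ 2 * traceNormAlong bp (D n - C₁) := by linarith
      have hlim2 : Filter.Tendsto (fun n => 2 * traceNormAlong bp (D n - C₁))
          Filter.atTop (nhds 0) := by
        have := hsplit.2.const_mul 2
        simpa using this
      have hle : ‖ContinuousLinearMap.adjoint C₁ + C₁‖ ≤ 0 :=
        ge_of_tendsto hlim2 (Filter.Eventually.of_forall hkey)
      have h0 : ContinuousLinearMap.adjoint C₁ + C₁ = 0 :=
        norm_le_zero_iff.mp hle
      exact eq_neg_of_add_eq_zero_left h0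
    · exact eq_zero_of_hsNorm_eq_zero bm hC₂ hsplit.1
  · -- m is closed
    intro Eseq C₁ C₂ hE hC₁ hC₂ hlim
    have hsplit := tendsto_const_add_zero
      (fun n => hsNorm_nonneg bm (Eseq n - C₂)) (traceNormAlong_nonneg bp C₁) hlim
    constructor
    · -- transp C C₂ = C₂
      have hXn : ∀ n, IsHS bm (Eseq n - C₂) := fun n => isHS_sub bm (hE n).2 hC₂
      have hkey : ∀ n, ‖transp C C₂ - C₂‖ ≤ 2 * hsNorm bm (Eseq n - C₂) := by
        intro n
        have heq : transp C C₂ - C₂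
            = -(transp C (Eseq n - C₂)) + (Eseq n - C₂) := by
          rw [transp_sub, (hE n).1]
          abel
        rw [heq]
        have hop : ‖Eseq n - C₂‖ ≤ hsNorm bm (Eseq n - C₂) := opNorm_le_hsNorm bm (hXn n)
        have htle : ‖transp C (Eseq n - C₂)‖ ≤ ‖Eseq n - C₂‖ := norm_transp_le C _
        calc ‖-(transp C (Eseq n - C₂)) + (Eseq n - C₂)‖
            ≤ ‖-(transp C (Eseq n - C₂))‖ + ‖Eseq n - C₂‖ := norm_add_le _ _
          _ = ‖transp C (Eseq n - C₂)‖ + ‖Eseq n - C₂‖ := by rw [norm_neg]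
          _ ≤ 2 * hsNorm bm (Eseq n - C₂) := by linarith
      have hlim2 : Filter.Tendsto (fun n => 2 * hsNorm bm (Eseq n - C₂))
          Filter.atTop (nhds 0) := by
        have := hsplit.2.const_mul 2
        simpa using this
      have hle : ‖transp C C₂ - C₂‖ ≤ 0 :=
        ge_of_tendsto hlim2 (Filter.Eventually.of_forall hkey)
      exact sub_eq_zero.mp (norm_le_zero_iff.mp hle)
    · exact eq_zero_of_traceNormAlong_eq_zero bp C₁ hC₁ hsplit.1

end Siegel
end
end
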